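/- arXiv:0708.1155 — 3 statements merged into one kernel-verified Lean document; each statement's English description precedes it below -/
import Mathlib

section
/- Let μ > 1/4. Then the operator L_μ admits no positive local super-harmonic: for every ρ ∈ (0, ρ₀) there is no function h ∈ C²(Ω_ρ) with h > 0 on Ω_ρ and −Δh(x) − (μ/δ(x)²)h(x) ≥ 0 for all x ∈ Ω_ρ. (Theorem 2.2, nonexistence direction.) -/
open Set Metric MeasureTheory Real

noncomputable section

/-- Distance to the boundary of `Ω`. -/
def bdist {N : ℕ} (Ω : Set (EuclideanSpace ℝ (Fin N))) (x : EuclideanSpace ℝ (Fin N)) : ℝ :=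
  Metric.infDist x Ωᶜ

/-- The collar `Ω_ρ = {x ∈ Ω : δ(x) < ρ}`. -/
def collar {N : ℕ} (Ω : Set (EuclideanSpace ℝ (Fin N))) (ρ : ℝ) :
    Set (EuclideanSpace ℝ (Fin N)) :=
  {x ∈ Ω | bdist Ω x < ρ}

/-- The ring `Ω_{ε,ρ} = {x ∈ Ω : ε < δ(x) < ρ}`. -/
def ring' {N : ℕ} (Ω : Set (EuclideanSpace ℝ (Fin N))) (ε ρ : ℝ) :
    Set (EuclideanSpace ℝ (Fin N)) :=
  {x ∈ Ω | ε < bdist Ω x ∧ bdist Ω x < ρ}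

/-- The Laplacian. -/
def lap {N : ℕ} (f : EuclideanSpace ℝ (Fin N) → ℝ) (x : EuclideanSpace ℝ (Fin N)) : ℝ :=
  ∑ i : Fin N, fderiv ℝ (fun y => fderiv ℝ f y (EuclideanSpace.single i 1)) x
    (EuclideanSpace.single i 1)

/-- `ρ₀` is a good collar width: `δ` is `C²` on `Ω_{ρ₀}`, `|∇δ| = 1` there, `Δδ` bounded. -/
def GoodCollar {N : ℕ} (Ω : Set (EuclideanSpace ℝ (Fin N))) (ρ₀ : ℝ) : Prop :=
  0 < ρ₀ ∧ ContDiffOn ℝ 2 (bdist Ω) (collar Ω ρ₀) ∧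
    (∀ x ∈ collar Ω ρ₀, ‖gradient (bdist Ω) x‖ = 1) ∧
    ∃ M, ∀ x ∈ collar Ω ρ₀, |lap (bdist Ω) x| ≤ M

/-- A super-harmonic of `L_μ = -Δ - μ/δ²` on `G`. -/
def SuperHarm {N : ℕ} (Ω : Set (EuclideanSpace ℝ (Fin N))) (μ : ℝ)
    (G : Set (EuclideanSpace ℝ (Fin N))) (h : EuclideanSpace ℝ (Fin N) → ℝ) : Prop :=
  ContDiffOn ℝ 2 h G ∧ ∀ x ∈ G, 0 ≤ -(lap h x) - μ / (bdist Ω x) ^ 2 * h x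

/-- A sub-harmonic of `L_μ = -Δ - μ/δ²` on `G`. -/
def SubHarm {N : ℕ} (Ω : Set (EuclideanSpace ℝ (Fin N))) (μ : ℝ)
    (G : Set (EuclideanSpace ℝ (Fin N))) (h : EuclideanSpace ℝ (Fin N) → ℝ) : Prop :=
  ContDiffOn ℝ 2 h G ∧ ∀ x ∈ G, -(lap h x) - μ / (bdist Ω x) ^ 2 * h x ≤ 0

/-- A positive local super-harmonic of `L_μ`, defined on the collar `Ω_σ`. -/
def PosSuperHarmOn {N : ℕ} (Ω : Set (EuclideanSpace ℝ (Fin N))) (μ σ : ℝ)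
    (h : EuclideanSpace ℝ (Fin N) → ℝ) : Prop :=
  SuperHarm Ω μ (collar Ω σ) h ∧ ∀ x ∈ collar Ω σ, 0 < h x

/-- A sub-solution of `(*)`: `-Δu - (μ/δ²)u + u^p/δ^s = 0` on `G`. -/
def SubSol {N : ℕ} (Ω : Set (EuclideanSpace ℝ (Fin N))) (μ s p : ℝ)
    (G : Set (EuclideanSpace ℝ (Fin N))) (u : EuclideanSpace ℝ (Fin N) → ℝ) : Prop :=
  ContDiffOn ℝ 2 u G ∧ (∀ x ∈ G, 0 ≤ u x) ∧
    ∀ x ∈ G, -(lap u x) - μ / (bdist Ω x) ^ 2 * u x + (u x) ^ p / (bdist Ω x) ^ s ≤ 0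

/-- A super-solution of `(*)` on `G`. -/
def SuperSol {N : ℕ} (Ω : Set (EuclideanSpace ℝ (Fin N))) (μ s p : ℝ)
    (G : Set (EuclideanSpace ℝ (Fin N))) (u : EuclideanSpace ℝ (Fin N) → ℝ) : Prop :=
  ContDiffOn ℝ 2 u G ∧ (∀ x ∈ G, 0 < u x) ∧
    ∀ x ∈ G, 0 ≤ -(lap u x) - μ / (bdist Ω x) ^ 2 * u x + (u x) ^ p / (bdist Ω x) ^ s

/-- A regularized distance `(d, c)` on `Ω`. -/
def RegDist {N : ℕ} (Ω : Set (EuclideanSpace ℝ (Fin N))) (d : EuclideanSpace ℝ (Fin N) → ℝ)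
    (c : ℝ) : Prop :=
  1 ≤ c ∧ ContDiffOn ℝ 2 d Ω ∧ (∀ x ∈ Ω, 0 < d x) ∧
    (∀ x ∈ Ω, c⁻¹ * bdist Ω x ≤ d x ∧ d x ≤ c * bdist Ω x) ∧
    (∀ x ∈ Ω, ‖gradient d x‖ ≤ c) ∧ (∀ x ∈ Ω, |lap d x| ≤ c / d x)

section AuxStmt0

open Filter Topology

/-- 1-D second derivative test: at a local minimum the second derivative is nonnegative. -/
lemma aux_second_deriv_test {f : ℝ → ℝ}
    (hf : ∀ᶠ t in 𝓝 (0:ℝ), DifferentiableAt ℝ f t)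
    (hf' : DifferentiableAt ℝ (deriv f) 0)
    (hmin : IsLocalMin f 0) : 0 ≤ deriv (deriv f) 0 := by
  by_contra hneg
  push_neg at hneg
  have h0 : deriv f 0 = 0 := hmin.deriv_eq_zero
  have hs := hf'.hasDerivAt
  rw [hasDerivAt_iff_tendsto_slope] at hs
  have hlt : ∀ᶠ t in 𝓝[≠] (0:ℝ), slope (deriv f) 0 t < 0 :=
    hs.eventually_lt_const hneg
  have hlt' : ∀ᶠ t in 𝓝[>] (0:ℝ), deriv f t < 0 := by
    filter_upwards [hlt.filter_mono (nhdsWithin_mono 0 (fun t ht => ne_of_gt ht)),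
      self_mem_nhdsWithin] with t h1 (h2 : 0 < t)
    rw [slope_def_field, h0, sub_zero, sub_zero] at h1
    exact (div_neg_iff.1 h1).resolve_left (fun h => absurd h2 (not_lt.2 h.2.le)) |>.1
  have hcomb : ∀ᶠ t in 𝓝[>] (0:ℝ),
      deriv f t < 0 ∧ DifferentiableAt ℝ f t ∧ f 0 ≤ f t := by
    filter_upwards [hlt', (hf.and hmin).filter_mono nhdsWithin_le_nhds] with t h1 h2
    exact ⟨h1, h2.1, h2.2⟩
  obtain ⟨u, hu, hsub⟩ := mem_nhdsGT_iff_exists_Ioo_subset.1 hcomb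
  have hu0 : (0:ℝ) < u := hu
  set r := u / 2 with hr
  have hr0 : 0 < r := by positivity
  have hru : r < u := by
    rw [hr]; linarith
  have hanti : StrictAntiOn f (Set.Icc 0 r) := by
    apply strictAntiOn_of_deriv_neg (convex_Icc 0 r)
    · intro t ht
      rcases eq_or_lt_of_le ht.1 with h | h
      · rw [← h]
        exact (hf.self_of_nhds).continuousAt.continuousWithinAt
      · exact ((hsub ⟨h, lt_of_le_of_lt ht.2 hru⟩).2.1).continuousAt.continuousWithinAt
    · intro t ht
      rw [interior_Icc] at ht
      exact (hsub ⟨ht.1, lt_trans ht.2 hru⟩).1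
  have h1 : f r < f 0 := hanti (by simp [hr0.le]) (by simp [hr0.le]) hr0
  have h2 : f 0 ≤ f r := (hsub ⟨hr0, hru⟩).2.2
  linarith

/-- At a local minimum of a `C²` function, each pure second directional derivative
is nonnegative. -/
lemma aux_directional_second_nonneg {N : ℕ} {F : EuclideanSpace ℝ (Fin N) → ℝ}
    {U : Set (EuclideanSpace ℝ (Fin N))} (hU : IsOpen U)
    {x : EuclideanSpace ℝ (Fin N)} (hx : x ∈ U) (hF : ContDiffOn ℝ 2 F U)
    (hmin : IsLocalMin F x) (e : EuclideanSpace ℝ (Fin N)) :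
    0 ≤ fderiv ℝ (fun y => fderiv ℝ F y e) x e := by
  have hFat : ∀ y ∈ U, ContDiffAt ℝ 2 F y := fun y hy => hF.contDiffAt (hU.mem_nhds hy)
  have hdiff : ∀ y ∈ U, DifferentiableAt ℝ F y := fun y hy =>
    (hFat y hy).differentiableAt (by norm_num)
  set ℓ : ℝ → EuclideanSpace ℝ (Fin N) := fun t => x + t • e with hℓdef
  have hℓ : ∀ t : ℝ, HasDerivAt ℓ e t := by
    intro t
    have : HasDerivAt (fun t : ℝ => t • e) ((1:ℝ) • e) t := (hasDerivAt_id t).smul_const e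
    have h' := this.const_add x
    rw [one_smul] at h'
    exact h'
  have hℓ0 : ℓ 0 = x := by simp [hℓdef]
  have hℓcont : Continuous ℓ := by continuity
  have hUt : ∀ᶠ t in 𝓝 (0:ℝ), ℓ t ∈ U := by
    have : ℓ ⁻¹' U ∈ 𝓝 (0:ℝ) := hℓcont.continuousAt.preimage_mem_nhds
      (by rw [hℓ0] at *; exact hU.mem_nhds hx)
    exact this
  set ψ : ℝ → ℝ := fun t => F (ℓ t) with hψdef
  have step1 : ∀ᶠ t in 𝓝 (0:ℝ), deriv ψ t = fderiv ℝ F (ℓ t) e := by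
    filter_upwards [hUt] with t ht
    exact (((hdiff _ ht).hasFDerivAt).comp_hasDerivAt t (hℓ t)).deriv
  set g : EuclideanSpace ℝ (Fin N) → (EuclideanSpace ℝ (Fin N) →L[ℝ] ℝ) :=
    fun y => fderiv ℝ F y with hgdef
  have hgd : DifferentiableAt ℝ g x := by
    have : ContDiffAt ℝ 1 g x := (hFat x hx).fderiv_right (by norm_num)
    exact this.differentiableAt (by norm_num)
  set ev : (EuclideanSpace ℝ (Fin N) →L[ℝ] ℝ) →L[ℝ] ℝ := ContinuousLinearMap.apply ℝ ℝ e
  have hcomp : HasDerivAt (fun t => fderiv ℝ F (ℓ t) e) ((fderiv ℝ g x e) e) 0 := by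
    have h1 : HasDerivAt (fun t => g (ℓ t)) (fderiv ℝ g x e) 0 := by
      have hgd' : HasFDerivAt g (fderiv ℝ g x) (ℓ 0) := by rw [hℓ0]; exact hgd.hasFDerivAt
      exact hgd'.comp_hasDerivAt 0 (hℓ 0)
    have h2 := (ev.hasFDerivAt (x := g (ℓ 0))).comp_hasDerivAt 0 h1
    exact h2
  have hRHS : fderiv ℝ (fun y => fderiv ℝ F y e) x e = (fderiv ℝ g x e) e := by
    have h3 : HasFDerivAt (fun y => fderiv ℝ F y e) (ev.comp (fderiv ℝ g x)) x :=
      (ev.hasFDerivAt).comp x hgd.hasFDerivAt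
    rw [h3.fderiv]
    rfl
  rw [hRHS]
  have key : 0 ≤ deriv (deriv ψ) 0 := by
    apply aux_second_deriv_test
    · filter_upwards [hUt] with t ht
      exact ((hdiff _ ht).comp t (hℓ t).differentiableAt)
    · rw [Filter.EventuallyEq.differentiableAt_iff step1]
      exact hcomp.differentiableAt
    · have heq : ψ 0 = F x := by rw [hψdef]; simp [hℓ0]
      unfold IsLocalMin IsMinFilter at hmin ⊢
      rw [heq]
      exact (hℓcont.continuousAt (x := (0:ℝ))).eventually (by rwa [hℓ0])
  rwa [Filter.EventuallyEq.deriv_eq step1, hcomp.deriv] at key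

lemma aux_lap_nonneg {N : ℕ} {F : EuclideanSpace ℝ (Fin N) → ℝ}
    {U : Set (EuclideanSpace ℝ (Fin N))} (hU : IsOpen U)
    {x : EuclideanSpace ℝ (Fin N)} (hx : x ∈ U) (hF : ContDiffOn ℝ 2 F U)
    (hmin : IsLocalMin F x) : 0 ≤ lap F x :=
  Finset.sum_nonneg fun _ _ => aux_directional_second_nonneg hU hx hF hmin _

lemma aux_hasfderiv_fderiv_apply {N : ℕ} {f : EuclideanSpace ℝ (Fin N) → ℝ}
    {U : Set (EuclideanSpace ℝ (Fin N))} (hU : IsOpen U)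
    {x : EuclideanSpace ℝ (Fin N)} (hx : x ∈ U) (hf : ContDiffOn ℝ 2 f U)
    (e : EuclideanSpace ℝ (Fin N)) :
    HasFDerivAt (fun y => fderiv ℝ f y e)
      ((ContinuousLinearMap.apply ℝ ℝ e).comp (fderiv ℝ (fderiv ℝ f) x)) x := by
  have hat : ContDiffAt ℝ 2 f x := hf.contDiffAt (hU.mem_nhds hx)
  have hgd : DifferentiableAt ℝ (fderiv ℝ f) x :=
    ((hat.fderiv_right (m := 1) (by norm_num)).differentiableAt (by norm_num) :
      DifferentiableAt ℝ (fderiv ℝ f) x)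
  exact ((ContinuousLinearMap.apply ℝ ℝ e).hasFDerivAt).comp x hgd.hasFDerivAt

/-- Linearity of the Laplacian on `C²` functions. -/
lemma aux_lap_comb {N : ℕ} {f g : EuclideanSpace ℝ (Fin N) → ℝ}
    {U : Set (EuclideanSpace ℝ (Fin N))} (hU : IsOpen U)
    {x : EuclideanSpace ℝ (Fin N)} (hx : x ∈ U)
    (hf : ContDiffOn ℝ 2 f U) (hg : ContDiffOn ℝ 2 g U) (c : ℝ)
    (e : EuclideanSpace ℝ (Fin N)) :
    fderiv ℝ (fun y => fderiv ℝ (fun z => c * f z - g z) y e) x e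
      = c * fderiv ℝ (fun y => fderiv ℝ f y e) x e
        - fderiv ℝ (fun y => fderiv ℝ g y e) x e := by
  have hfd : ∀ y ∈ U, DifferentiableAt ℝ f y := fun y hy =>
    (hf.contDiffAt (hU.mem_nhds hy)).differentiableAt (by norm_num)
  have hgd : ∀ y ∈ U, DifferentiableAt ℝ g y := fun y hy =>
    (hg.contDiffAt (hU.mem_nhds hy)).differentiableAt (by norm_num)
  have h2 : (fun y => fderiv ℝ (fun z => c * f z - g z) y e)
      =ᶠ[𝓝 x] (fun y => c * fderiv ℝ f y e - fderiv ℝ g y e) := by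
    filter_upwards [hU.mem_nhds hx] with y hy
    have := ((((hfd y hy).hasFDerivAt).const_mul c).sub ((hgd y hy).hasFDerivAt)).fderiv
    rw [show (fun z => c * f z - g z) = (fun y => c * f y) - g from rfl, this]
    simp
  have hAd : DifferentiableAt ℝ (fun y => fderiv ℝ f y e) x :=
    (aux_hasfderiv_fderiv_apply hU hx hf e).differentiableAt
  have hBd : DifferentiableAt ℝ (fun y => fderiv ℝ g y e) x :=
    (aux_hasfderiv_fderiv_apply hU hx hg e).differentiableAt
  rw [Filter.EventuallyEq.fderiv_eq h2, fderiv_fun_sub (hAd.const_mul c) hBd,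
    fderiv_const_mul hAd]
  simp

lemma aux_grad_sum {N : ℕ} {f : EuclideanSpace ℝ (Fin N) → ℝ}
    {x : EuclideanSpace ℝ (Fin N)} :
    ∑ i : Fin N, (fderiv ℝ f x (EuclideanSpace.single i 1)) ^ 2
      = ‖gradient f x‖ ^ 2 := by
  have h1 : ∀ i : Fin N, fderiv ℝ f x (EuclideanSpace.single i 1) = gradient f x i := by
    intro i
    have := InnerProductSpace.toDual_symm_apply (𝕜 := ℝ) (E := EuclideanSpace ℝ (Fin N))
      (x := EuclideanSpace.single i 1) (y := fderiv ℝ f x)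
    rw [← this]
    unfold gradient
    rw [real_inner_comm]
    rw [EuclideanSpace.inner_single_left]
    simp
  simp_rw [h1]
  rw [EuclideanSpace.norm_eq]
  rw [Real.sq_sqrt (by positivity)]
  congr 1
  ext i
  rw [Real.norm_eq_abs, sq_abs]

/-- The Laplacian of a composition `Q ∘ δ`. -/
lemma aux_lap_comp {N : ℕ} {δ : EuclideanSpace ℝ (Fin N) → ℝ}
    {U : Set (EuclideanSpace ℝ (Fin N))} (hU : IsOpen U)
    {x : EuclideanSpace ℝ (Fin N)} (hx : x ∈ U)
    (hδ : ContDiffOn ℝ 2 δ U) (hδcont : Continuous δ) (hδx : 0 < δ x)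
    {Q Q1 Q2 : ℝ → ℝ}
    (hQ : ∀ t, 0 < t → HasDerivAt Q (Q1 t) t)
    (hQ1 : ∀ t, 0 < t → HasDerivAt Q1 (Q2 t) t) :
    lap (fun z => Q (δ z)) x
      = Q2 (δ x) * (∑ i : Fin N, (fderiv ℝ δ x (EuclideanSpace.single i 1))^2)
        + Q1 (δ x) * lap δ x := by
  have hδd : ∀ y ∈ U, DifferentiableAt ℝ δ y := fun y hy =>
    (hδ.contDiffAt (hU.mem_nhds hy)).differentiableAt (by norm_num)
  have hev : ∀ᶠ y in 𝓝 x, y ∈ U ∧ 0 < δ y := by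
    have h1 : ∀ᶠ y in 𝓝 x, y ∈ U := hU.mem_nhds hx
    have h2 : ∀ᶠ y in 𝓝 x, 0 < δ y :=
      (hδcont.continuousAt (x := x)).eventually_const_lt hδx
    exact h1.and h2
  have key : ∀ e : EuclideanSpace ℝ (Fin N),
      fderiv ℝ (fun y => fderiv ℝ (fun z => Q (δ z)) y e) x e
        = Q2 (δ x) * (fderiv ℝ δ x e)^2
          + Q1 (δ x) * fderiv ℝ (fun y => fderiv ℝ δ y e) x e := by
    intro e
    have step1 : (fun y => fderiv ℝ (fun z => Q (δ z)) y e)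
        =ᶠ[𝓝 x] (fun y => Q1 (δ y) * fderiv ℝ δ y e) := by
      filter_upwards [hev] with y hy
      have hcomp : HasFDerivAt (fun z => Q (δ z)) (Q1 (δ y) • fderiv ℝ δ y) y :=
        (hQ _ hy.2).comp_hasFDerivAt y (hδd y hy.1).hasFDerivAt
      rw [hcomp.fderiv]
      simp
    have hA : HasFDerivAt (fun y => Q1 (δ y)) (Q2 (δ x) • fderiv ℝ δ x) x :=
      (hQ1 _ hδx).comp_hasFDerivAt x (hδd x hx).hasFDerivAt
    have hB := aux_hasfderiv_fderiv_apply hU hx hδ e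
    have hprod := hA.mul hB
    rw [Filter.EventuallyEq.fderiv_eq step1,
      (show HasFDerivAt (fun y => Q1 (δ y) * fderiv ℝ δ y e) _ x from hprod).fderiv, hB.fderiv]
    simp [ContinuousLinearMap.add_apply, ContinuousLinearMap.smul_apply]
    ring
  unfold lap
  simp_rw [key]
  rw [Finset.sum_add_distrib, ← Finset.mul_sum, ← Finset.mul_sum]

/-- The 1-D comparison profile `t ↦ √t · (1 - cos(ω (log t - α)))`. -/
def QF (ω α t : ℝ) : ℝ := Real.exp (Real.log t / 2) * (1 - Real.cos (ω * (Real.log t - α)))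

def QF1 (ω α t : ℝ) : ℝ := Real.exp (Real.log t / 2) / t *
  ((1 - Real.cos (ω * (Real.log t - α))) / 2 + ω * Real.sin (ω * (Real.log t - α)))

def QF2 (ω α t : ℝ) : ℝ := Real.exp (Real.log t / 2) / t ^ 2 *
  (ω ^ 2 * Real.cos (ω * (Real.log t - α)) - (1 - Real.cos (ω * (Real.log t - α))) / 4)

lemma QF_hasDeriv (ω α : ℝ) {t : ℝ} (ht : 0 < t) :
    HasDerivAt (QF ω α) (QF1 ω α t) t := by
  have hl : HasDerivAt Real.log t⁻¹ t := Real.hasDerivAt_log ht.ne'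
  have hexp : HasDerivAt (fun t => Real.exp (Real.log t / 2))
      (Real.exp (Real.log t / 2) * (t⁻¹ / 2)) t := (hl.div_const 2).exp
  have hθ : HasDerivAt (fun t => ω * (Real.log t - α)) (ω * t⁻¹) t := by
    simpa using ((hl.sub_const α).const_mul ω)
  have hcos := hθ.cos
  have h1 := hexp.mul (hcos.const_sub 1)
  refine h1.congr_deriv ?_
  unfold QF1
  field_simp

lemma QF1_hasDeriv (ω α : ℝ) {t : ℝ} (ht : 0 < t) :
    HasDerivAt (QF1 ω α) (QF2 ω α t) t := by
  have hl : HasDerivAt Real.log t⁻¹ t := Real.hasDerivAt_log ht.ne'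
  have hexp : HasDerivAt (fun t => Real.exp (Real.log t / 2))
      (Real.exp (Real.log t / 2) * (t⁻¹ / 2)) t := (hl.div_const 2).exp
  have hθ : HasDerivAt (fun t => ω * (Real.log t - α)) (ω * t⁻¹) t := by
    simpa using ((hl.sub_const α).const_mul ω)
  have hcos := hθ.cos
  have hsin := hθ.sin
  have hquot := hexp.div (hasDerivAt_id t) ht.ne'
  have hS := ((hcos.const_sub 1).div_const 2).add (hsin.const_mul ω)
  have h1 := hquot.mul hS
  refine h1.congr_deriv ?_
  unfold QF2
  simp only [Pi.div_apply, Pi.add_apply, id]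
  field_simp
  ring

lemma QF_contDiffAt (ω α : ℝ) {t : ℝ} (ht : 0 < t) :
    ContDiffAt ℝ 2 (QF ω α) t := by
  have hlog : ContDiffAt ℝ 2 Real.log t := Real.contDiffAt_log.mpr ht.ne'
  have hθ : ContDiffAt ℝ 2 (fun t : ℝ => ω * (Real.log t - α)) t :=
    contDiffAt_const.mul (hlog.sub contDiffAt_const)
  exact ((hlog.div_const 2).exp).mul (contDiffAt_const.sub hθ.cos)

lemma key_ineq {ω μ M L t : ℝ} (α : ℝ) (hω : 0 < ω) (hc : ω ^ 2 ≤ μ - 1/4) (hM : 0 < M)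
    (ht : 0 < t) (htb : M * t * (1 + ω) ≤ ω ^ 2 / 2) (hL : |L| ≤ M) :
    0 < QF2 ω α t + QF1 ω α t * L + μ * QF ω α t / t ^ 2 := by
  have hApos : 0 < Real.exp (Real.log t / 2) := Real.exp_pos _
  set c := Real.cos (ω * (Real.log t - α)) with hc'
  set s := Real.sin (ω * (Real.log t - α)) with hs'
  have hcos1 : c ≤ 1 := Real.cos_le_one _
  have hcosm : -1 ≤ c := Real.neg_one_le_cos _
  have hsin1 : |s| ≤ 1 := Real.abs_sin_le_one _
  have heq : QF2 ω α t + QF1 ω α t * L + μ * QF ω α t / t ^ 2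
      = Real.exp (Real.log t / 2) / t ^ 2 * ((ω ^ 2 * c + (μ - 1/4) * (1 - c))
          + t * L * ((1 - c) / 2 + ω * s)) := by
    unfold QF QF1 QF2
    rw [← hc', ← hs']
    field_simp
    ring
  rw [heq]
  have e1 : ω ^ 2 ≤ ω ^ 2 * c + (μ - 1/4) * (1 - c) := by nlinarith
  have habs : |(1 - c) / 2 + ω * s| ≤ 1 + ω := by
    calc |(1 - c) / 2 + ω * s| ≤ |(1 - c) / 2| + |ω * s| := abs_add_le _ _
    _ ≤ 1 + ω := by
        rw [abs_mul, abs_div, abs_of_pos hω, abs_two]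
        have h2 : |1 - c| ≤ 2 := by rw [abs_le]; constructor <;> nlinarith
        nlinarith [abs_le.1 hsin1, hω]
  have e2 : |t * L * ((1 - c) / 2 + ω * s)| ≤ M * t * (1 + ω) := by
    rw [abs_mul, abs_mul, abs_of_pos ht]
    have h1 : |L| * |(1 - c)/2 + ω * s| ≤ M * (1 + ω) :=
      mul_le_mul hL habs (abs_nonneg _) hM.le
    nlinarith [abs_nonneg L, abs_nonneg ((1 - c)/2 + ω * s)]
  have e3 : -(M * t * (1 + ω)) ≤ t * L * ((1 - c) / 2 + ω * s) := by
    have := neg_abs_le (t * L * ((1 - c) / 2 + ω * s))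
    linarith
  have hpos : 0 < (ω ^ 2 * c + (μ - 1/4) * (1 - c)) + t * L * ((1 - c) / 2 + ω * s) := by
    nlinarith
  exact mul_pos (by positivity) hpos

lemma QF_pos {ω α t : ℝ} (h1 : 0 < ω * (Real.log t - α))
    (h2 : ω * (Real.log t - α) < 2 * Real.pi) : 0 < QF ω α t := by
  apply mul_pos (Real.exp_pos _)
  have hle : Real.cos (ω * (Real.log t - α)) ≤ 1 := Real.cos_le_one _
  have hne : Real.cos (ω * (Real.log t - α)) ≠ 1 := by
    intro hcontra
    rw [Real.cos_eq_one_iff_of_lt_of_lt (by linarith [Real.pi_pos]) h2] at hcontra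
    linarith
  have : Real.cos (ω * (Real.log t - α)) < 1 := lt_of_le_of_ne hle hne
  linarith

end AuxStmt0

/-- For `μ > 1/4` the operator `L_μ` admits no positive local
super-harmonic: for every `ρ ∈ (0, ρ₀)` there is no positive `C²` function `h` on `Ω_ρ`
with `-Δh - (μ/δ²)h ≥ 0` on `Ω_ρ`. -/



theorem stmt0 {N : ℕ} (hN : 2 ≤ N) (Ω : Set (EuclideanSpace ℝ (Fin N)))
    (hΩo : IsOpen Ω) (hΩne : Ω.Nonempty) (hΩb : Bornology.IsBounded Ω)
    (ρ₀ : ℝ) (hρ₀ : GoodCollar Ω ρ₀) (μ : ℝ) (hμ : 1 / 4 < μ) :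
    ∀ ρ, 0 < ρ → ρ < ρ₀ →
      ¬ ∃ h : EuclideanSpace ℝ (Fin N) → ℝ,
          SuperHarm Ω μ (collar Ω ρ) h ∧ ∀ x ∈ collar Ω ρ, 0 < h x := by
  intro ρ hρpos hρρ₀
  rintro ⟨h, ⟨hC2, hSup⟩, hpos⟩
  obtain ⟨hρ₀pos, hδC2, hδgrad, M₀, hM₀⟩ := hρ₀
  have hδcont : Continuous (bdist Ω) := Metric.continuous_infDist_pt _
  -- the complement is nonempty and closed
  haveI : Nontrivial (EuclideanSpace ℝ (Fin N)) := by
    refine ⟨EuclideanSpace.single ⟨0, by omega⟩ (1:ℝ), 0, fun hcontra => ?_⟩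
    have := congrArg norm hcontra
    rw [EuclideanSpace.norm_single] at this
    simp at this
  have hΩc : Ωᶜ.Nonempty := by
    by_contra hc
    rw [Set.not_nonempty_iff_eq_empty, Set.compl_empty_iff] at hc
    obtain ⟨r, hr⟩ := hΩb.subset_ball 0
    obtain ⟨x, hx⟩ := NormedSpace.exists_lt_norm ℝ (EuclideanSpace ℝ (Fin N)) r
    have : x ∈ Metric.ball (0 : EuclideanSpace ℝ (Fin N)) r := hr (hc ▸ Set.mem_univ x)
    rw [Metric.mem_ball, dist_zero_right] at this
    linarith
  have hΩcc : IsClosed Ωᶜ := hΩo.isClosed_compl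
  have hδΩ : ∀ x : EuclideanSpace ℝ (Fin N), x ∈ Ω ↔ 0 < bdist Ω x := by
    intro x
    rw [← Set.notMem_compl_iff]
    exact hΩcc.notMem_iff_infDist_pos hΩc
  -- collars are open
  have hcollar_open : ∀ σ : ℝ, IsOpen (collar Ω σ) := by
    intro σ
    have : collar Ω σ = Ω ∩ (bdist Ω) ⁻¹' (Set.Iio σ) := rfl
    rw [this]
    exact hΩo.inter (isOpen_Iio.preimage hδcont)
  -- parameters
  set M := max M₀ 1 with hMdef
  have hM : (0:ℝ) < M := lt_of_lt_of_le one_pos (le_max_right _ _)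
  set ω := Real.sqrt ((μ - 1/4)/2) with hωdef
  have hω : 0 < ω := Real.sqrt_pos.2 (by linarith)
  have hω2 : ω^2 = (μ - 1/4)/2 := Real.sq_sqrt (by linarith)
  have hωμ : ω^2 ≤ μ - 1/4 := by rw [hω2]; linarith
  obtain ⟨x₀, hx₀⟩ := hΩne
  have hd₀ : 0 < bdist Ω x₀ := (hδΩ x₀).1 hx₀
  set b := min (min (ρ/2) (ω^2/(2*M*(1+ω)))) (bdist Ω x₀/2) with hbdef
  have hb0 : 0 < b := by
    apply lt_min (lt_min (by linarith) (by positivity)) (by linarith)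
  have hbρ : b ≤ ρ/2 := le_trans (min_le_left _ _) (min_le_left _ _)
  have hbM : b ≤ ω^2/(2*M*(1+ω)) := le_trans (min_le_left _ _) (min_le_right _ _)
  have hbd₀ : b ≤ bdist Ω x₀ / 2 := min_le_right _ _
  set a := b * Real.exp (-(2*Real.pi/ω)) with hadef
  have ha0 : 0 < a := mul_pos hb0 (Real.exp_pos _)
  have hab : a < b := by
    rw [hadef]
    have h1 : Real.exp (-(2*Real.pi/ω)) < 1 := by
      rw [Real.exp_lt_one_iff]
      have h2 : 0 < 2*Real.pi/ω := by positivity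
      linarith
    nlinarith
  set α := Real.log a with hαdef
  have hlogb : Real.log b = α + 2*Real.pi/ω := by
    rw [hαdef, hadef, Real.log_mul hb0.ne' (Real.exp_ne_zero _), Real.log_exp]
    ring
  -- find a point y with bdist Ω y = (a+b)/2
  obtain ⟨z, hz⟩ := hΩc
  set p : ℝ → EuclideanSpace ℝ (Fin N) := fun t => x₀ + t • (z - x₀) with hpdef
  have hpc : Continuous fun t => bdist Ω (p t) := by
    apply hδcont.comp
    exact continuous_const.add (continuous_id.smul continuous_const)
  have hp0 : bdist Ω (p 0) = bdist Ω x₀ := by simp [hpdef]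
  have hp1 : bdist Ω (p 1) = 0 := by
    have : p 1 = z := by simp [hpdef]
    rw [this]
    exact Metric.infDist_zero_of_mem hz
  have hmem : (a+b)/2 ∈ Set.Icc (bdist Ω (p 1)) (bdist Ω (p 0)) := by
    rw [hp0, hp1]
    constructor
    · linarith
    · linarith
  obtain ⟨t₀, _, hyval⟩ := intermediate_value_Icc' (by norm_num : (0:ℝ) ≤ 1)
    (hpc.continuousOn) hmem
  have hyval2 : bdist Ω (p t₀) = (a + b) / 2 := hyval
  set y := p t₀ with hydef
  have hya : a < bdist Ω y := by rw [hyval2]; linarith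
  have hyb : bdist Ω y < b := by rw [hyval2]; linarith
  -- the compact set K and the open set G
  set K := (bdist Ω) ⁻¹' (Set.Icc a b) with hKdef
  set G := (bdist Ω) ⁻¹' (Set.Ioo a b) with hGdef
  have hGK : G ⊆ K := fun x hx => ⟨hx.1.le, hx.2.le⟩
  have hGopen : IsOpen G := isOpen_Ioo.preimage hδcont
  have hKΩ : K ⊆ Ω := fun x hx => (hδΩ x).2 (lt_of_lt_of_le ha0 hx.1)
  have hKρ : K ⊆ collar Ω ρ := fun x hx =>
    ⟨hKΩ hx, lt_of_le_of_lt hx.2 (by linarith)⟩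
  have hKρ₀ : K ⊆ collar Ω ρ₀ := fun x hx =>
    ⟨hKΩ hx, lt_of_le_of_lt hx.2 (by linarith)⟩
  have hKc : IsCompact K := by
    apply Metric.isCompact_of_isClosed_isBounded
    · exact isClosed_Icc.preimage hδcont
    · exact hΩb.subset hKΩ
  have hyG : y ∈ G := ⟨hya, hyb⟩
  have hyK : y ∈ K := hGK hyG
  -- positivity of δ on K
  have hδKpos : ∀ x ∈ K, 0 < bdist Ω x := fun x hx => (hδΩ x).1 (hKΩ hx)
  -- the subsolution v
  set v : EuclideanSpace ℝ (Fin N) → ℝ := fun x => QF ω α (bdist Ω x) with hvdef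
  -- θ bounds on G
  have hθG : ∀ x, a < bdist Ω x → bdist Ω x < b →
      0 < ω * (Real.log (bdist Ω x) - α) ∧ ω * (Real.log (bdist Ω x) - α) < 2*Real.pi := by
    intro x h1 h2
    have hl1 : α < Real.log (bdist Ω x) := by
      rw [hαdef]; exact Real.log_lt_log ha0 h1
    have hl2 : Real.log (bdist Ω x) < α + 2*Real.pi/ω := by
      rw [← hlogb]; exact Real.log_lt_log (lt_trans ha0 h1) h2
    constructor
    · apply mul_pos hω; linarith
    · calc ω * (Real.log (bdist Ω x) - α) < ω * (2*Real.pi/ω) := by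
            apply mul_lt_mul_of_pos_left _ hω; linarith
      _ = 2*Real.pi := by field_simp
  have hvy : 0 < v y := QF_pos (hθG y hya hyb).1 (hθG y hya hyb).2
  -- v vanishes on the edge of K
  have hvedge : ∀ x ∈ K, bdist Ω x = a ∨ bdist Ω x = b → v x = 0 := by
    intro x _ hx
    rcases hx with hx | hx
    · rw [hvdef]
      simp only [QF, hx, ← hαdef]
      simp
    · rw [hvdef]
      simp only [QF, hx, hlogb]
      have : ω * (α + 2*Real.pi/ω - α) = 2*Real.pi := by field_simp; ring
      rw [this, Real.cos_two_pi]
      simp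
  -- continuity of v on K
  have hvca : ∀ x : EuclideanSpace ℝ (Fin N), 0 < bdist Ω x → ContinuousAt v x := by
    intro x hx
    have hl : ContinuousAt (fun u => Real.log (bdist Ω u)) x :=
      (Real.continuousAt_log hx.ne').comp hδcont.continuousAt
    rw [hvdef]
    unfold QF
    exact ((Real.continuous_exp.continuousAt).comp (hl.div_const 2)).mul
      (continuousAt_const.sub ((Real.continuous_cos.continuousAt).comp
        (continuousAt_const.mul (hl.sub continuousAt_const))))
  -- the maximum of v / h on K
  have hhcont : ContinuousOn h K := (hC2.continuousOn).mono hKρ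
  have hhKpos : ∀ x ∈ K, 0 < h x := fun x hx => hpos x (hKρ hx)
  have hrcont : ContinuousOn (fun x => v x / h x) K := by
    apply ContinuousOn.div
    · exact fun x hx => (hvca x (hδKpos x hx)).continuousWithinAt
    · exact hhcont
    · exact fun x hx => (hhKpos x hx).ne'
  obtain ⟨w, hwK, hwmax⟩ := hKc.exists_isMaxOn ⟨y, hyK⟩ hrcont
  set T := v w / h w with hTdef
  have hTy : v y / h y ≤ T := hwmax hyK
  have hT : 0 < T := lt_of_lt_of_le (div_pos hvy (hhKpos y hyK)) hTy
  have hwG : w ∈ G := by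
    rcases lt_or_eq_of_le (hwK.1 : a ≤ bdist Ω w) with h1 | h1
    · rcases lt_or_eq_of_le (hwK.2 : bdist Ω w ≤ b) with h2 | h2
      · exact ⟨h1, h2⟩
      · exfalso
        have : v w = 0 := hvedge w hwK (Or.inr h2)
        rw [hTdef, this] at hT
        simp at hT
    · exfalso
      have : v w = 0 := hvedge w hwK (Or.inl h1.symm)
      rw [hTdef, this] at hT
      simp at hT
  have hδw : 0 < bdist Ω w := hδKpos w hwK
  -- F has a local minimum at w
  set F : EuclideanSpace ℝ (Fin N) → ℝ := fun x => T * h x - v x with hFdef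
  have hThw : T * h w = v w := by
    rw [hTdef]
    exact div_mul_cancel₀ _ (hhKpos w hwK).ne'
  have hF0 : F w = 0 := by rw [hFdef]; simp only [hThw]; ring
  have hminF : IsLocalMin F w := by
    unfold IsLocalMin IsMinFilter
    filter_upwards [hGopen.mem_nhds hwG] with u hu
    have huK : u ∈ K := hGK hu
    have h1 : v u / h u ≤ T := hwmax huK
    have h2 : v u ≤ T * h u := by
      rw [div_le_iff₀ (hhKpos u huK)] at h1
      linarith [h1]
    rw [hF0, hFdef]
    simp only []
    linarith
  -- C² properties on G
  have hhC2G : ContDiffOn ℝ 2 h G := hC2.mono (fun x hx => hKρ (hGK hx))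
  have hvC2G : ContDiffOn ℝ 2 v G := by
    intro x hx
    have hδat : ContDiffAt ℝ 2 (bdist Ω) x :=
      hδC2.contDiffAt ((hcollar_open ρ₀).mem_nhds (hKρ₀ (hGK hx)))
    have := (QF_contDiffAt ω α (hδKpos x (hGK hx))).comp x hδat
    exact this.contDiffWithinAt
  have hFC2G : ContDiffOn ℝ 2 F G := (contDiffOn_const.mul hhC2G).sub hvC2G
  -- the Laplacian of F at w is nonnegative
  have hlapF : 0 ≤ lap F w := aux_lap_nonneg hGopen hwG hFC2G hminF
  -- the Laplacian of F splits
  have hlapsplit : lap F w = T * lap h w - lap v w := by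
    unfold lap
    have hcongr : ∀ i : Fin N,
        fderiv ℝ (fun y => fderiv ℝ F y (EuclideanSpace.single i 1)) w
            (EuclideanSpace.single i 1)
          = T * fderiv ℝ (fun y => fderiv ℝ h y (EuclideanSpace.single i 1)) w
              (EuclideanSpace.single i 1)
            - fderiv ℝ (fun y => fderiv ℝ v y (EuclideanSpace.single i 1)) w
              (EuclideanSpace.single i 1) := by
      intro i
      simp only [hFdef]
      exact aux_lap_comb hGopen hwG hhC2G hvC2G T (EuclideanSpace.single i 1)
    rw [Finset.sum_congr rfl (fun i _ => hcongr i), Finset.sum_sub_distrib,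
      ← Finset.mul_sum]
  -- the Laplacian of v at w
  have hlapv : lap v w = QF2 ω α (bdist Ω w)
      + QF1 ω α (bdist Ω w) * lap (bdist Ω) w := by
    have h1 := aux_lap_comp (hcollar_open ρ₀) (hKρ₀ (hGK hwG)) hδC2 hδcont hδw
      (fun t ht => QF_hasDeriv ω α ht) (fun t ht => QF1_hasDeriv ω α ht)
    have h2 : (∑ i : Fin N,
        (fderiv ℝ (bdist Ω) w (EuclideanSpace.single i 1))^2) = 1 := by
      rw [aux_grad_sum, hδgrad w (hKρ₀ (hGK hwG))]
      norm_num
    simp only [hvdef]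
    rw [h1, h2, mul_one]
  -- the super-harmonicity of h at w
  have hsup := hSup w (hKρ (hGK hwG))
  have hlapδ : |lap (bdist Ω) w| ≤ M :=
    le_trans (hM₀ w (hKρ₀ (hGK hwG))) (le_max_left _ _)
  clear_value a b α M ω
  have htb : M * (bdist Ω w) * (1 + ω) ≤ ω^2/2 := by
    have hδwb : bdist Ω w ≤ b := hwK.2
    clear * - hδwb hbM hM hω hδw
    have hbM' : b * (2*M*(1+ω)) ≤ ω^2 := by
      rw [le_div_iff₀ (by positivity)] at hbM
      linarith
    have e := mul_le_mul_of_nonneg_left hδwb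
      (by positivity : (0:ℝ) ≤ M * (1+ω))
    nlinarith [e, hbM']
  have hkey := key_ineq α hω hωμ hM hδw htb hlapδ
  -- put it all together
  have hvw : v w = QF ω α (bdist Ω w) := by rw [hvdef]
  have h3 : lap h w ≤ -(μ / (bdist Ω w)^2 * h w) := by linarith
  have h4 : T * lap h w ≤ T * -(μ / (bdist Ω w)^2 * h w) :=
    mul_le_mul_of_nonneg_left h3 hT.le
  have h5 : T * -(μ / (bdist Ω w)^2 * h w)
      = -(μ * QF ω α (bdist Ω w) / (bdist Ω w)^2) := by
    have h6 : T * h w = QF ω α (bdist Ω w) := by rw [hThw, hvw]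
    calc T * -(μ / (bdist Ω w)^2 * h w)
        = -(μ / (bdist Ω w)^2 * (T * h w)) := by ring
      _ = -(μ * QF ω α (bdist Ω w) / (bdist Ω w)^2) := by rw [h6]; ring
  linarith
end
end

section
/- (Phragmen–Lindelöf alternative.) Let μ ≤ 1/4 and let u be a local sub-harmonic of L_μ, defined on Ω_ρ for some ρ > 0. Suppose there exists a positive local super-harmonic h* of L_μ with limsup_{δ(x)→0} u(x)/h*(x) ≤ 0. Then for every positive local super-harmonic h of L_μ there exist c > 0 and ρ' > 0 such that u(x) ≤ c·h(x) for all x ∈ Ω_{ρ'}; in particular limsup_{δ(x)→0} u(x)/h(x) < ∞ for every positive local super-harmonic h. -/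
open Set Metric MeasureTheory Real

noncomputable section

set_option maxHeartbeats 1000000

section Toolkit
open Filter
variable {N : ℕ}
local notation "E" => EuclideanSpace ℝ (Fin N)

def D2 (f : E → ℝ) (x e : E) : ℝ := fderiv ℝ (fun y => fderiv ℝ f y e) x e

lemma lap_eq_sum (f : E → ℝ) (x : E) :
    lap f x = ∑ i : Fin N, D2 f x (EuclideanSpace.single i 1) := rfl

lemma contDiffAt_two_ne_top : (2 : WithTop ℕ∞) ≠ ((⊤ : ℕ∞) : WithTop ℕ∞) := by decide

lemma diffAt_of_c2 {f : E → ℝ} {x : E} (hf : ContDiffAt ℝ 2 f x) : DifferentiableAt ℝ f x :=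
  hf.differentiableAt two_ne_zero

lemma diffAt_fderiv_of_c2 {f : E → ℝ} {x : E} (hf : ContDiffAt ℝ 2 f x) :
    DifferentiableAt ℝ (fderiv ℝ f) x :=
  (hf.fderiv_right (le_refl (2 : WithTop ℕ∞))).differentiableAt one_ne_zero

lemma diffAt_d1_of_c2 {f : E → ℝ} {x : E} (hf : ContDiffAt ℝ 2 f x) (e : E) :
    DifferentiableAt ℝ (fun y => fderiv ℝ f y e) x :=
  (diffAt_fderiv_of_c2 hf).clm_apply (differentiableAt_const e)

lemma d2_congr {f g : E → ℝ} {x : E} (hfg : f =ᶠ[nhds x] g) (e : E) :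
    D2 f x e = D2 g x e := by
  have h1 : (fun y => fderiv ℝ f y e) =ᶠ[nhds x] (fun y => fderiv ℝ g y e) := by
    filter_upwards [hfg.eventuallyEq_nhds] with y hy
    rw [hy.fderiv_eq]
  unfold D2
  rw [h1.fderiv_eq]

lemma lap_congr {f g : E → ℝ} {x : E} (hfg : f =ᶠ[nhds x] g) : lap f x = lap g x := by
  rw [lap_eq_sum, lap_eq_sum]
  exact Finset.sum_congr rfl fun i _ => d2_congr hfg _

lemma d1_comb {f g k : E → ℝ} {x : E} {a b : ℝ} (hf : DifferentiableAt ℝ f x)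
    (hg : DifferentiableAt ℝ g x) (hk : DifferentiableAt ℝ k x) (e : E) :
    fderiv ℝ (fun z => a * f z + b * g z - k z) x e
      = a * fderiv ℝ f x e + b * fderiv ℝ g x e - fderiv ℝ k x e := by
  rw [fderiv_fun_sub ((hf.const_mul a).fun_add (hg.const_mul b)) hk,
    fderiv_fun_add (hf.const_mul a) (hg.const_mul b), fderiv_const_mul hf a, fderiv_const_mul hg b]
  simp

lemma d2_comb {f g k : E → ℝ} {x : E} {a b : ℝ} (hf : ContDiffAt ℝ 2 f x)
    (hg : ContDiffAt ℝ 2 g x) (hk : ContDiffAt ℝ 2 k x) (e : E) :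
    D2 (fun z => a * f z + b * g z - k z) x e = a * D2 f x e + b * D2 g x e - D2 k x e := by
  have hev : (fun y => fderiv ℝ (fun z => a * f z + b * g z - k z) y e)
      =ᶠ[nhds x] (fun y => a * fderiv ℝ f y e + b * fderiv ℝ g y e - fderiv ℝ k y e) := by
    filter_upwards [hf.eventually contDiffAt_two_ne_top, hg.eventually contDiffAt_two_ne_top,
      hk.eventually contDiffAt_two_ne_top] with y hfy hgy hky
    exact d1_comb (diffAt_of_c2 hfy) (diffAt_of_c2 hgy) (diffAt_of_c2 hky) e
  unfold D2
  rw [hev.fderiv_eq]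
  exact d1_comb (diffAt_d1_of_c2 hf e) (diffAt_d1_of_c2 hg e) (diffAt_d1_of_c2 hk e) e

lemma lap_comb {f g k : E → ℝ} {x : E} {a b : ℝ} (hf : ContDiffAt ℝ 2 f x)
    (hg : ContDiffAt ℝ 2 g x) (hk : ContDiffAt ℝ 2 k x) :
    lap (fun z => a * f z + b * g z - k z) x = a * lap f x + b * lap g x - lap k x := by
  simp only [lap_eq_sum]
  rw [Finset.sum_congr rfl fun i _ => d2_comb hf hg hk _]
  rw [Finset.sum_sub_distrib, Finset.sum_add_distrib, Finset.mul_sum, Finset.mul_sum]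

lemma d1_mul {f g : E → ℝ} {x : E} (hf : DifferentiableAt ℝ f x)
    (hg : DifferentiableAt ℝ g x) (e : E) :
    fderiv ℝ (fun z => f z * g z) x e = f x * fderiv ℝ g x e + g x * fderiv ℝ f x e := by
  rw [fderiv_fun_mul hf hg]; simp

lemma d2_mul {f g : E → ℝ} {x : E} (hf : ContDiffAt ℝ 2 f x) (hg : ContDiffAt ℝ 2 g x) (e : E) :
    D2 (fun z => f z * g z) x e
      = f x * D2 g x e + 2 * (fderiv ℝ f x e * fderiv ℝ g x e) + g x * D2 f x e := by
  have hev : (fun y => fderiv ℝ (fun z => f z * g z) y e)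
      =ᶠ[nhds x] (fun y => f y * fderiv ℝ g y e + g y * fderiv ℝ f y e) := by
    filter_upwards [hf.eventually contDiffAt_two_ne_top, hg.eventually contDiffAt_two_ne_top]
      with y hfy hgy
    exact d1_mul (diffAt_of_c2 hfy) (diffAt_of_c2 hgy) e
  unfold D2
  rw [hev.fderiv_eq]
  have h1 : DifferentiableAt ℝ (fun y => f y * fderiv ℝ g y e) x :=
    (diffAt_of_c2 hf).mul (diffAt_d1_of_c2 hg e)
  have h2 : DifferentiableAt ℝ (fun y => g y * fderiv ℝ f y e) x :=
    (diffAt_of_c2 hg).mul (diffAt_d1_of_c2 hf e)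
  rw [fderiv_fun_add h1 h2]
  simp only [ContinuousLinearMap.add_apply]
  rw [d1_mul (diffAt_of_c2 hf) (diffAt_d1_of_c2 hg e) e,
    d1_mul (diffAt_of_c2 hg) (diffAt_d1_of_c2 hf e) e]
  ring

lemma lap_mul {f g : E → ℝ} {x : E} (hf : ContDiffAt ℝ 2 f x) (hg : ContDiffAt ℝ 2 g x) :
    lap (fun z => f z * g z) x
      = f x * lap g x + 2 * (∑ i : Fin N, fderiv ℝ f x (EuclideanSpace.single i 1)
          * fderiv ℝ g x (EuclideanSpace.single i 1)) + g x * lap f x := by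
  simp only [lap_eq_sum]
  rw [Finset.sum_congr rfl fun i _ => d2_mul hf hg _]
  rw [Finset.sum_add_distrib, Finset.sum_add_distrib, Finset.mul_sum, Finset.mul_sum,
    Finset.mul_sum]

lemma d1_sub_cmul {f g : E → ℝ} {x : E} {a : ℝ} (hf : DifferentiableAt ℝ f x)
    (hg : DifferentiableAt ℝ g x) (e : E) :
    fderiv ℝ (fun z => f z - a * g z) x e = fderiv ℝ f x e - a * fderiv ℝ g x e := by
  rw [fderiv_fun_sub hf (hg.const_mul a), fderiv_const_mul hg a]
  simp

lemma d2_sub_cmul {f g : E → ℝ} {x : E} {a : ℝ} (hf : ContDiffAt ℝ 2 f x)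
    (hg : ContDiffAt ℝ 2 g x) (e : E) :
    D2 (fun z => f z - a * g z) x e = D2 f x e - a * D2 g x e := by
  have hev : (fun y => fderiv ℝ (fun z => f z - a * g z) y e)
      =ᶠ[nhds x] (fun y => fderiv ℝ f y e - a * fderiv ℝ g y e) := by
    filter_upwards [hf.eventually contDiffAt_two_ne_top, hg.eventually contDiffAt_two_ne_top]
      with y hfy hgy
    exact d1_sub_cmul (diffAt_of_c2 hfy) (diffAt_of_c2 hgy) e
  unfold D2
  rw [hev.fderiv_eq]
  exact d1_sub_cmul (diffAt_d1_of_c2 hf e) (diffAt_d1_of_c2 hg e) e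

lemma lap_sub_cmul {f g : E → ℝ} {x : E} {a : ℝ} (hf : ContDiffAt ℝ 2 f x)
    (hg : ContDiffAt ℝ 2 g x) :
    lap (fun z => f z - a * g z) x = lap f x - a * lap g x := by
  simp only [lap_eq_sum]
  rw [Finset.sum_congr rfl fun i _ => d2_sub_cmul hf hg _, Finset.sum_sub_distrib,
    Finset.mul_sum]

lemma lap_continuousOn {f : E → ℝ} {G : Set E} (hf : ContDiffOn ℝ 2 f G) (hG : IsOpen G) :
    ContinuousOn (lap f) G := by
  have hf1 : ContDiffOn ℝ 1 (fderiv ℝ f) G :=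
    hf.fderiv_of_isOpen (m := 1) hG (by norm_num)
  have hf0 : ContinuousOn (fderiv ℝ (fderiv ℝ f)) G :=
    (hf1.fderiv_of_isOpen (m := 0) hG (by norm_num)).continuousOn
  unfold lap
  apply continuousOn_finset_sum
  intro i _
  set e := EuclideanSpace.single i (1 : ℝ) with he
  have key : ∀ x ∈ G, fderiv ℝ (fderiv ℝ f) x e e
      = fderiv ℝ (fun y => fderiv ℝ f y e) x e := by
    intro x hx
    have hdc : DifferentiableAt ℝ (fderiv ℝ f) x :=
      (hf1.differentiableOn one_ne_zero).differentiableAt (hG.mem_nhds hx)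
    rw [fderiv_clm_apply hdc (differentiableAt_const e)]
    simp
  exact ContinuousOn.congr ((hf0.clm_apply continuousOn_const).clm_apply continuousOn_const)
    (fun x hx => (key x hx).symm)
lemma second_deriv_test {f : E → ℝ} {x : E} (hf : ContDiffAt ℝ 2 f x)
    (hmin : IsLocalMin f x) (e : E) : 0 ≤ D2 f x e := by
  by_contra hneg
  push_neg at hneg
  set F : E → ℝ := fun y => fderiv ℝ f y e with hF
  have hF0 : F x = 0 := by rw [hF]; simp [hmin.fderiv_eq_zero]
  have hFd : DifferentiableAt ℝ F x := diffAt_d1_of_c2 hf e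
  set L : ℝ → E := fun t => x + t • e with hL
  have hLd : ∀ t : ℝ, HasDerivAt L e t := by
    intro t
    simpa [hL] using ((hasDerivAt_id t).smul_const e).const_add x
  have hLc : Continuous L := by fun_prop
  have hL0 : L 0 = x := by simp [hL]
  have hG1 : HasDerivAt (F ∘ L) (D2 f x e) 0 := by
    have hFd' : HasFDerivAt F (fderiv ℝ F x) (L 0) := by rw [hL0]; exact hFd.hasFDerivAt
    exact hFd'.comp_hasDerivAt 0 (hLd 0)
  have hslope : Tendsto (slope (F ∘ L) 0) (nhdsWithin 0 {(0:ℝ)}ᶜ) (nhds (D2 f x e)) :=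
    hasDerivAt_iff_tendsto_slope.mp hG1
  have hev1 : ∀ᶠ t in nhdsWithin 0 {(0:ℝ)}ᶜ, slope (F ∘ L) 0 t < 0 :=
    Tendsto.eventually_lt_const hneg hslope
  rw [eventually_nhdsWithin_iff] at hev1
  have hLev : Tendsto L (nhds 0) (nhds x) := by
    have := hLc.tendsto 0; rwa [hL0] at this
  have hev2 : ∀ᶠ t in nhds (0:ℝ), ContDiffAt ℝ 2 f (L t) :=
    hLev.eventually (hf.eventually contDiffAt_two_ne_top)
  have hev3 : ∀ᶠ t in nhds (0:ℝ), deriv (f ∘ L) t = F (L t) ∧ ContinuousAt (f ∘ L) t := by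
    filter_upwards [hev2] with t ht
    have hd : HasDerivAt (f ∘ L) (fderiv ℝ f (L t) e) t :=
      (diffAt_of_c2 ht).hasFDerivAt.comp_hasDerivAt t (hLd t)
    exact ⟨hd.deriv, hd.continuousAt⟩
  have hmin2 : IsLocalMin (f ∘ L) 0 := by
    have hm : IsLocalMin f (L 0) := by rw [hL0]; exact hmin
    exact hm.comp_continuous hLc.continuousAt
  have hall : ∀ᶠ t in nhds (0:ℝ), (t ∈ ({(0:ℝ)}ᶜ : Set ℝ) → slope (F ∘ L) 0 t < 0) ∧
      ((deriv (f ∘ L) t = F (L t) ∧ ContinuousAt (f ∘ L) t) ∧ (f ∘ L) 0 ≤ (f ∘ L) t) :=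
    hev1.and (hev3.and hmin2)
  rw [Metric.eventually_nhds_iff] at hall
  obtain ⟨r, hr, hball⟩ := hall
  have hball' : ∀ t : ℝ, |t| < r → (t ≠ 0 → slope (F ∘ L) 0 t < 0) ∧
      ((deriv (f ∘ L) t = F (L t) ∧ ContinuousAt (f ∘ L) t) ∧ (f ∘ L) 0 ≤ (f ∘ L) t) := by
    intro t ht
    have := hball (y := t) (by simpa [Real.dist_eq] using ht)
    simpa using this
  set r' := r / 2 with hr'
  have hr'pos : 0 < r' := by positivity
  have hanti : StrictAntiOn (f ∘ L) (Icc 0 r') := by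
    apply strictAntiOn_of_deriv_neg (convex_Icc 0 r')
    · intro t ht
      have habs : |t| < r := by
        rw [abs_of_nonneg ht.1]
        calc t ≤ r' := ht.2
        _ < r := by linarith
      exact ((hball' t habs).2.1.2).continuousWithinAt
    · intro t ht
      rw [interior_Icc] at ht
      have habs : |t| < r := by
        rw [abs_of_nonneg ht.1.le]
        calc t < r' := ht.2
        _ < r := by linarith
      have h1 := (hball' t habs).1 (ne_of_gt ht.1)
      have h2 := (hball' t habs).2.1.1
      rw [slope_def_field] at h1
      rw [h2]
      have hFL : F (L t) / t < 0 := by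
        simpa [Function.comp, hL0, hF0] using h1
      rcases div_neg_iff.mp hFL with ⟨hp, hq⟩ | ⟨hp, hq⟩
      · linarith [ht.1]
      · exact hp
  have hlt : (f ∘ L) r' < (f ∘ L) 0 :=
    hanti (left_mem_Icc.mpr hr'pos.le) (right_mem_Icc.mpr hr'pos.le) hr'pos
  have hge : (f ∘ L) 0 ≤ (f ∘ L) r' := by
    have habs : |r'| < r := by rw [abs_of_pos hr'pos]; linarith
    exact (hball' r' habs).2.2
  linarith
section phi
variable (α : ℝ) (i₀ : Fin N)

def phi (α : ℝ) (i₀ : Fin N) : E → ℝ := fun y => Real.exp (α * y i₀)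

lemma phi_pos (y : E) : 0 < phi α i₀ y := Real.exp_pos _

lemma phi_contDiff : ContDiff ℝ 2 (phi (N := N) α i₀) := by
  apply (Real.contDiff_exp.of_le le_top).comp
  exact contDiff_const.mul (EuclideanSpace.proj i₀ : E →L[ℝ] ℝ).contDiff

lemma phi_hasFDerivAt (x : E) :
    HasFDerivAt (phi α i₀) ((Real.exp (α * x i₀)) • (α • (EuclideanSpace.proj i₀ : E →L[ℝ] ℝ))) x := by
  have hlin : HasFDerivAt (fun y : E => α * y i₀)
      (α • (EuclideanSpace.proj i₀ : E →L[ℝ] ℝ)) x :=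
    (EuclideanSpace.proj i₀ : E →L[ℝ] ℝ).hasFDerivAt.const_mul α
  exact (Real.hasDerivAt_exp (α * x i₀)).comp_hasFDerivAt x hlin

lemma phi_d1 (x e : E) : fderiv ℝ (phi α i₀) x e = α * e i₀ * phi α i₀ x := by
  rw [(phi_hasFDerivAt α i₀ x).fderiv]
  simp [phi]
  ring

lemma phi_d2 (x e : E) : D2 (phi α i₀) x e = α * e i₀ * (α * e i₀ * phi α i₀ x) := by
  have h1 : (fun y : E => fderiv ℝ (phi α i₀) y e) = fun y => α * e i₀ * phi α i₀ y :=
    funext fun y => phi_d1 α i₀ y e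
  unfold D2
  rw [h1, fderiv_const_mul ((phi_contDiff α i₀).differentiable two_ne_zero).differentiableAt]
  simp [phi_d1]

lemma phi_lap (x : E) : lap (phi α i₀) x = α ^ 2 * phi α i₀ x := by
  rw [lap_eq_sum]
  have h1 : ∀ i : Fin N, D2 (phi α i₀) x (EuclideanSpace.single i 1)
      = if i₀ = i then α ^ 2 * phi α i₀ x else 0 := by
    intro i
    rw [phi_d2, EuclideanSpace.single_apply]
    by_cases h : i₀ = i <;> simp [h] <;> ring
  rw [Finset.sum_congr rfl fun i _ => h1 i]
  simp
end phi

lemma lap_nonneg_of_localmin {f : E → ℝ} {x : E} (hf : ContDiffAt ℝ 2 f x)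
    (hmin : IsLocalMin f x) : 0 ≤ lap f x := by
  rw [lap_eq_sum]
  exact Finset.sum_nonneg fun i _ => second_deriv_test hf hmin _

/-- Weak maximum principle via ground-state transform. -/
lemma max_principle (i₀ : Fin N) {w h c : E → ℝ} {G S : Set E}
    (hGopen : IsOpen G) (hSopen : IsOpen S) (hKG : closure S ⊆ G)
    (hGb : Bornology.IsBounded G)
    (hwC2 : ContDiffOn ℝ 2 w G) (hhC2 : ContDiffOn ℝ 2 h G)
    (hhpos : ∀ x ∈ G, 0 < h x)
    (hccont : ContinuousOn c G)
    (hLh : ∀ x ∈ G, 0 ≤ -(lap h x) - c x * h x)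
    (hLw : ∀ x ∈ G, 0 ≤ -(lap w x) - c x * w x)
    (hfr : ∀ x ∈ closure S \ S, 0 ≤ w x) :
    ∀ x ∈ S, 0 ≤ w x := by
  intro x₀ hx₀
  set K := closure S with hK
  have hSsubK : S ⊆ K := subset_closure
  have hKcpt : IsCompact K := isCompact_of_isClosed_isBounded isClosed_closure (hGb.subset hKG)
  have hKne : K.Nonempty := ⟨x₀, hSsubK hx₀⟩
  set v : E → ℝ := fun y => w y / h y with hv
  have hvC2 : ContDiffOn ℝ 2 v G := by
    have := hwC2.div hhC2 (fun x hx => (hhpos x hx).ne')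
    exact this
  have hwvh : ∀ y ∈ G, v y * h y = w y := fun y hy => div_mul_cancel₀ _ (hhpos y hy).ne'
  have hhcont : ContinuousOn h K := hhC2.continuousOn.mono hKG
  have hvcont : ContinuousOn v K := hvC2.continuousOn.mono hKG
  -- minimum of h on K
  obtain ⟨zh, hzhK, hzh⟩ := hKcpt.exists_isMinOn hKne hhcont
  set hm := h zh with hhm
  have hmpos : 0 < hm := hhpos zh (hKG hzhK)
  have hmle : ∀ y ∈ K, hm ≤ h y := fun y hy => hzh hy
  -- bound on the directional derivative of h
  set e₀ : E := EuclideanSpace.single i₀ 1 with he₀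
  have hD1cont : ContinuousOn (fun y => fderiv ℝ h y e₀) G :=
    ((hhC2.fderiv_of_isOpen (m := 1) hGopen (by norm_num)).continuousOn).clm_apply
      continuousOn_const
  obtain ⟨B₀, hB₀⟩ := hKcpt.exists_bound_of_continuousOn (hD1cont.mono hKG)
  set B := max B₀ 0 with hBdef
  have hBnn : 0 ≤ B := le_max_right _ _
  have hB : ∀ y ∈ K, |fderiv ℝ h y e₀| ≤ B := fun y hy =>
    le_trans (by simpa [Real.norm_eq_abs] using hB₀ y hy) (le_max_left _ _)
  -- bound on Lh
  have hLhcont : ContinuousOn (fun y => -(lap h y) - c y * h y) G :=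
    ((lap_continuousOn hhC2 hGopen).neg).sub (hccont.mul hhC2.continuousOn)
  obtain ⟨Q₀, hQ₀⟩ := hKcpt.exists_bound_of_continuousOn (hLhcont.mono hKG)
  set Q := max Q₀ 0 with hQdef
  have hQnn : 0 ≤ Q := le_max_right _ _
  have hQ : ∀ y ∈ K, -(lap h y) - c y * h y ≤ Q := fun y hy =>
    le_trans (le_trans (le_abs_self _) (by simpa [Real.norm_eq_abs] using hQ₀ y hy))
      (le_max_left _ _)
  -- choice of α
  set α := max 1 ((2 * B + Q + 1) / hm) with hα
  have hα1 : (1:ℝ) ≤ α := le_max_left _ _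
  have hαpos : 0 < α := lt_of_lt_of_le one_pos hα1
  have hαhm : 2 * B + Q + 1 ≤ α * hm := by
    have := le_max_right 1 ((2 * B + Q + 1) / hm)
    rw [div_le_iff₀ hmpos] at this
    linarith
  -- bound on phi
  obtain ⟨Φ₀, hΦ₀⟩ := hKcpt.exists_bound_of_continuousOn
    ((phi_contDiff α i₀).continuous.continuousOn (s := K))
  set Φ := max Φ₀ 0 with hΦdef
  have hΦnn : 0 ≤ Φ := le_max_right _ _
  have hΦ : ∀ y ∈ K, phi α i₀ y ≤ Φ := fun y hy =>
    le_trans (le_trans (le_abs_self _) (by simpa [Real.norm_eq_abs] using hΦ₀ y hy))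
      (le_max_left _ _)
  -- main claim
  have key : ∀ γ : ℝ, 0 < γ → -(γ * Φ) ≤ v x₀ := by
    intro γ hγ
    set vg : E → ℝ := fun y => v y - γ * phi α i₀ y with hvg
    have hvgcont : ContinuousOn vg K :=
      hvcont.sub (continuousOn_const.mul (phi_contDiff α i₀).continuous.continuousOn)
    obtain ⟨z, hzK, hzmin⟩ := hKcpt.exists_isMinOn hKne hvgcont
    have hzmin' : ∀ y ∈ K, vg z ≤ vg y := fun y hy => hzmin hy
    have hvgz : -(γ * Φ) ≤ vg z := by
      by_cases hcase : z ∈ S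
      · -- interior point : PDE argument excludes vg z ≤ 0
        by_contra hcon
        push_neg at hcon
        have hvgz0 : vg z ≤ 0 := le_trans hcon.le (by nlinarith)
        have hzG : z ∈ G := hKG hzK
        have hnz : G ∈ nhds z := hGopen.mem_nhds hzG
        have hvC2z : ContDiffAt ℝ 2 v z := hvC2.contDiffAt hnz
        have hhC2z : ContDiffAt ℝ 2 h z := hhC2.contDiffAt hnz
        have hwC2z : ContDiffAt ℝ 2 w z := hwC2.contDiffAt hnz
        have hφC2z : ContDiffAt ℝ 2 (phi α i₀) z := (phi_contDiff α i₀).contDiffAt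
        have hvgC2z : ContDiffAt ℝ 2 vg z := hvC2z.sub (contDiffAt_const.mul hφC2z)
        have hlocmin : IsLocalMin vg z := by
          filter_upwards [hSopen.mem_nhds hcase] with y hy using hzmin' y (hSsubK hy)
        -- first derivatives of v at z
        have hdvg0 : fderiv ℝ vg z = 0 := hlocmin.fderiv_eq_zero
        have hdv : ∀ e : E, fderiv ℝ v z e = γ * fderiv ℝ (phi α i₀) z e := by
          intro e
          have h1 : fderiv ℝ vg z e = fderiv ℝ v z e - γ * fderiv ℝ (phi α i₀) z e :=
            d1_sub_cmul (diffAt_of_c2 hvC2z) (diffAt_of_c2 hφC2z) e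
          rw [hdvg0] at h1
          simp at h1
          linarith
        -- Laplacian of v at z
        have hlapvg : 0 ≤ lap vg z := lap_nonneg_of_localmin hvgC2z hlocmin
        have hlapcomb : lap vg z = lap v z - γ * lap (phi α i₀) z := lap_sub_cmul hvC2z hφC2z
        have hlapv : γ * (α ^ 2 * phi α i₀ z) ≤ lap v z := by
          rw [hlapcomb, phi_lap] at hlapvg
          linarith
        -- product expansion of lap w at z
        have hwev : w =ᶠ[nhds z] fun y => v y * h y := by
          filter_upwards [hnz] with y hy using (hwvh y hy).symm
        have hlapw : lap w z = v z * lap h z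
            + 2 * (∑ i : Fin N, fderiv ℝ v z (EuclideanSpace.single i 1)
              * fderiv ℝ h z (EuclideanSpace.single i 1)) + h z * lap v z := by
          rw [lap_congr hwev, lap_mul hvC2z hhC2z]
        -- collapse the cross term
        have hcross : (∑ i : Fin N, fderiv ℝ v z (EuclideanSpace.single i 1)
            * fderiv ℝ h z (EuclideanSpace.single i 1))
            = γ * (α * phi α i₀ z * fderiv ℝ h z e₀) := by
          have hterm : ∀ i : Fin N, fderiv ℝ v z (EuclideanSpace.single i 1)
              * fderiv ℝ h z (EuclideanSpace.single i 1)
              = if i₀ = i then γ * (α * phi α i₀ z * fderiv ℝ h z e₀) else 0 := by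
            intro i
            rw [hdv, phi_d1, EuclideanSpace.single_apply]
            by_cases hi : i₀ = i
            · subst hi; simp [he₀]; ring
            · simp [hi, Ne.symm hi]
          rw [Finset.sum_congr rfl fun i _ => hterm i]
          simp
        -- numeric contradiction
        set φz := phi α i₀ z with hφz
        have hφzpos : 0 < φz := phi_pos α i₀ z
        have hφzΦ : φz ≤ Φ := hΦ z hzK
        have hvz : v z ≤ γ * φz := by
          have : vg z = v z - γ * φz := rfl
          linarith
        have hLhz := hLh z hzG
        have hQz := hQ z hzK
        have hBz := hB z hzK
        have hmz := hmle z hzK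
        have hLwz := hLw z hzG
        have hwz : w z = v z * h z := (hwvh z hzG).symm
        rw [hlapw, hcross, hwz] at hLwz
        -- h z * lap v z ≤ v z * (-(lap h z) - c z * h z) - 2 γ α φz D1h
        have hmain : h z * lap v z ≤ v z * (-(lap h z) - c z * h z)
            - 2 * (γ * (α * φz * fderiv ℝ h z e₀)) := by nlinarith [hLwz]
        have hlhs : hm * (γ * (α ^ 2 * φz)) ≤ h z * lap v z := by
          have h1 : 0 ≤ γ * (α ^ 2 * φz) := by positivity
          have hhz : 0 < h z := hhpos z hzG
          calc hm * (γ * (α ^ 2 * φz)) ≤ h z * (γ * (α ^ 2 * φz)) :=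
                mul_le_mul_of_nonneg_right hmz h1
            _ ≤ h z * lap v z := mul_le_mul_of_nonneg_left hlapv hhz.le
        have hrhs1 : v z * (-(lap h z) - c z * h z) ≤ γ * φz * Q := by
          have hgp : 0 ≤ γ * φz := by positivity
          calc v z * (-(lap h z) - c z * h z) ≤ (γ * φz) * (-(lap h z) - c z * h z) :=
                mul_le_mul_of_nonneg_right hvz hLhz
            _ ≤ (γ * φz) * Q := mul_le_mul_of_nonneg_left hQz hgp
            _ = γ * φz * Q := by ring
        have hrhs2 : - (2 * (γ * (α * φz * fderiv ℝ h z e₀))) ≤ 2 * γ * α * φz * B := by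
          have habs := abs_le.mp hBz
          have hD : -(fderiv ℝ h z e₀) ≤ B := by linarith [habs.1]
          have hc3 : (0:ℝ) ≤ 2 * γ * α * φz := by positivity
          calc - (2 * (γ * (α * φz * fderiv ℝ h z e₀)))
              = (2 * γ * α * φz) * (-(fderiv ℝ h z e₀)) := by ring
            _ ≤ (2 * γ * α * φz) * B := mul_le_mul_of_nonneg_left hD hc3
            _ = 2 * γ * α * φz * B := by ring
        -- combine : hm * γ * α² * φz ≤ γ φz Q + 2 γ α φz B then divide
        have h2 : hm * (γ * (α ^ 2 * φz)) ≤ γ * φz * Q + 2 * γ * α * φz * B := by linarith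
        have hpos : (0:ℝ) < γ * φz := by positivity
        have h2' : γ * φz * (hm * α ^ 2) ≤ γ * φz * (Q + 2 * α * B) := by linear_combination h2
        have h3 : hm * α ^ 2 ≤ Q + 2 * α * B := le_of_mul_le_mul_left h2' hpos
        have e1 : α * (α * hm) = hm * α ^ 2 := by ring
        have e2 : α * (2 * B + Q + 1) ≤ α * (α * hm) :=
          mul_le_mul_of_nonneg_left hαhm hαpos.le
        have e3 : 0 ≤ (α - 1) * Q := mul_nonneg (by linarith) hQnn
        nlinarith [e1, e2, e3, h3]
      · -- frontier point
        have hzG : z ∈ G := hKG hzK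
        have hw0 : 0 ≤ w z := hfr z ⟨hzK, hcase⟩
        have hv0 : 0 ≤ v z := div_nonneg hw0 (hhpos z hzG).le
        have : vg z = v z - γ * phi α i₀ z := rfl
        have hφz := hΦ z hzK
        have hφp := (phi_pos α i₀ z).le
        nlinarith
    have hle := hzmin' x₀ (hSsubK hx₀)
    have : vg x₀ = v x₀ - γ * phi α i₀ x₀ := rfl
    nlinarith [(phi_pos α i₀ x₀), hΦ x₀ (hSsubK hx₀), hγ]
  -- conclude
  have hv0 : 0 ≤ v x₀ := by
    by_contra hcon
    push_neg at hcon
    have h1 : (0:ℝ) < Φ + 1 := by linarith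
    have hkey := key ((-(v x₀)) / (Φ + 1)) (div_pos (by linarith) h1)
    rw [neg_div, neg_mul, neg_neg, div_mul_eq_mul_div, div_le_iff₀ h1] at hkey
    nlinarith
  have := hwvh x₀ (hKG (hSsubK hx₀))
  nlinarith [hhpos x₀ (hKG (hSsubK hx₀))]

end Toolkit

/-- (Phragmen–Lindelöf alternative.) Let `μ ≤ 1/4` and let `u` be a local
sub-harmonic of `L_μ` on `Ω_ρ`. If there is a positive local super-harmonic `h⋆` with
`limsup_{δ(x)→0} u(x)/h⋆(x) ≤ 0`, then for every positive local super-harmonic `h` there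
are `c > 0` and `ρ' > 0` with `u ≤ c·h` on `Ω_{ρ'}`; in particular
`limsup_{δ(x)→0} u(x)/h(x) < ∞` for every positive local super-harmonic `h`. -/
theorem stmt3 {N : ℕ} (hN : 2 ≤ N) (Ω : Set (EuclideanSpace ℝ (Fin N)))
    (hΩo : IsOpen Ω) (hΩne : Ω.Nonempty) (hΩb : Bornology.IsBounded Ω)
    (μ : ℝ) (hμ : μ ≤ 1 / 4)
    (u : EuclideanSpace ℝ (Fin N) → ℝ) (ρ : ℝ) (hρ : 0 < ρ)
    (hu : SubHarm Ω μ (collar Ω ρ) u)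
    (hstar : ∃ σ, 0 < σ ∧ ∃ hs : EuclideanSpace ℝ (Fin N) → ℝ, PosSuperHarmOn Ω μ σ hs ∧
      ∀ ε : ℝ, 0 < ε → ∃ τ, 0 < τ ∧ τ ≤ min ρ σ ∧
        ∀ x ∈ collar Ω τ, u x / hs x ≤ ε) :
    (∀ σ, 0 < σ → ∀ h : EuclideanSpace ℝ (Fin N) → ℝ, PosSuperHarmOn Ω μ σ h →
      ∃ c, 0 < c ∧ ∃ ρ', 0 < ρ' ∧ ρ' ≤ min ρ σ ∧ ∀ x ∈ collar Ω ρ', u x ≤ c * h x) ∧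
    (∀ σ, 0 < σ → ∀ h : EuclideanSpace ℝ (Fin N) → ℝ, PosSuperHarmOn Ω μ σ h →
      ∃ C : ℝ, ∃ τ, 0 < τ ∧ τ ≤ min ρ σ ∧ ∀ x ∈ collar Ω τ, u x / h x ≤ C) := by
  classical
  obtain ⟨σ₀, hσ₀, hs, hhs, hlim⟩ := hstar
  have hδcont : Continuous (bdist Ω) := Metric.continuous_infDist_pt _
  have hmemΩ : ∀ x : EuclideanSpace ℝ (Fin N), 0 < bdist Ω x → x ∈ Ω := by
    intro x hx
    by_contra hxn
    have h0 : bdist Ω x = 0 := Metric.infDist_zero_of_mem hxn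
    linarith
  have hcolmono : ∀ {a b : ℝ}, a ≤ b → collar Ω a ⊆ collar Ω b := by
    intro a b hab x hx
    exact ⟨hx.1, lt_of_lt_of_le hx.2 hab⟩
  set i₀ : Fin N := ⟨0, by omega⟩ with hi₀
  have main : ∀ σ, 0 < σ → ∀ h : EuclideanSpace ℝ (Fin N) → ℝ, PosSuperHarmOn Ω μ σ h →
      ∃ c, 0 < c ∧ ∃ ρ', 0 < ρ' ∧ ρ' ≤ min ρ σ ∧ ∀ x ∈ collar Ω ρ', u x ≤ c * h x := by
    intro σ hσ h hposh
    set ρS := min (min ρ σ) σ₀ with hρS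
    have hρSpos : 0 < ρS := lt_min (lt_min hρ hσ) hσ₀
    have hρSρ : ρS ≤ ρ := le_trans (min_le_left _ _) (min_le_left _ _)
    have hρSσ : ρS ≤ σ := le_trans (min_le_left _ _) (min_le_right _ _)
    have hρSσ₀ : ρS ≤ σ₀ := min_le_right _ _
    set ρ' := ρS / 2 with hρ'def
    have hρ'pos : 0 < ρ' := by positivity
    set ρ'' := ρS * 3 / 4 with hρ''def
    have hρ'ρ'' : ρ' < ρ'' := by rw [hρ'def, hρ''def]; linarith
    have hρ''ρS : ρ'' < ρS := by rw [hρ''def]; linarith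
    have hρ'ρS : ρ' < ρS := by rw [hρ'def]; linarith
    -- the level set Γ = {δ = ρ'} and the constant c₀
    set Γ : Set (EuclideanSpace ℝ (Fin N)) := {x | bdist Ω x = ρ'} with hΓdef
    have hΓcol : ∀ {r : ℝ}, ρ' < r → Γ ⊆ collar Ω r := by
      intro r hr x hx
      have hx' : bdist Ω x = ρ' := hx
      exact ⟨hmemΩ x (by rw [hx']; exact hρ'pos), by rw [hx']; exact hr⟩
    have hΓρ : Γ ⊆ collar Ω ρ := hΓcol (lt_of_lt_of_le hρ'ρS hρSρ)
    have hΓσ : Γ ⊆ collar Ω σ := hΓcol (lt_of_lt_of_le hρ'ρS hρSσ)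
    have hΓσ₀ : Γ ⊆ collar Ω σ₀ := hΓcol (lt_of_lt_of_le hρ'ρS hρSσ₀)
    have hΓclosed : IsClosed Γ := isClosed_eq hδcont continuous_const
    have hΓcpt : IsCompact Γ :=
      isCompact_of_isClosed_isBounded hΓclosed (hΩb.subset (fun x hx => (hΓρ hx).1))
    have hcontuh : ContinuousOn (fun x => u x / h x) Γ :=
      (hu.1.continuousOn.mono hΓρ).div (hposh.1.1.continuousOn.mono hΓσ)
        (fun x hx => (hposh.2 x (hΓσ hx)).ne')
    have hbdd : BddAbove (insert 0 ((fun x => u x / h x) '' Γ)) :=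
      (hΓcpt.image_of_continuousOn hcontuh).bddAbove.insert 0
    set c₀ := sSup (insert 0 ((fun x => u x / h x) '' Γ)) with hc₀def
    have hc₀0 : 0 ≤ c₀ := le_csSup hbdd (mem_insert _ _)
    have hc₀Γ : ∀ x ∈ Γ, u x ≤ c₀ * h x := by
      intro x hx
      have h1 : u x / h x ≤ c₀ := le_csSup hbdd (mem_insert_of_mem _ ⟨x, hx, rfl⟩)
      have hp : 0 < h x := hposh.2 x (hΓσ hx)
      rw [div_le_iff₀ hp] at h1
      linarith
    -- the ε-claim
    have hclaim : ∀ ε : ℝ, 0 < ε → ∀ x ∈ collar Ω ρ', u x ≤ c₀ * h x + ε * hs x := by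
      intro ε hε
      obtain ⟨τ, hτpos, hτle, hτbd⟩ := hlim ε hε
      have hτσ₀ : τ ≤ σ₀ := le_trans hτle (min_le_right _ _)
      have huhs : ∀ x ∈ collar Ω τ, u x ≤ ε * hs x := by
        intro x hx
        have hhsx : 0 < hs x := hhs.2 x (hcolmono hτσ₀ hx)
        have h1 := hτbd x hx
        rw [div_le_iff₀ hhsx] at h1
        linarith
      set τ' := min (τ / 2) (ρ' / 2) with hτ'def
      have hτ'pos : 0 < τ' := lt_min (by positivity) (by positivity)
      have hτ'τ : τ' < τ := lt_of_le_of_lt (min_le_left _ _) (by linarith)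
      have hτ'ρ' : τ' < ρ' := lt_of_le_of_lt (min_le_right _ _) (by linarith)
      set S : Set (EuclideanSpace ℝ (Fin N)) := (bdist Ω) ⁻¹' (Ioo τ' ρ') with hSdef
      set G : Set (EuclideanSpace ℝ (Fin N)) := (bdist Ω) ⁻¹' (Ioo (τ' / 2) ρ'') with hGdef
      have hSopen : IsOpen S := isOpen_Ioo.preimage hδcont
      have hGopen : IsOpen G := isOpen_Ioo.preimage hδcont
      have hGcol : ∀ {r : ℝ}, ρ'' ≤ r → G ⊆ collar Ω r := by
        intro r hr x hx
        have hx' : τ' / 2 < bdist Ω x ∧ bdist Ω x < ρ'' := hx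
        exact ⟨hmemΩ x (lt_trans (by positivity) hx'.1), lt_of_lt_of_le hx'.2 hr⟩
      have hGρ : G ⊆ collar Ω ρ := hGcol (le_trans hρ''ρS.le hρSρ)
      have hGσ : G ⊆ collar Ω σ := hGcol (le_trans hρ''ρS.le hρSσ)
      have hGσ₀ : G ⊆ collar Ω σ₀ := hGcol (le_trans hρ''ρS.le hρSσ₀)
      have hKG : closure S ⊆ G := by
        intro x hx
        have h1 : x ∈ (bdist Ω) ⁻¹' (Icc τ' ρ') :=
          closure_minimal (preimage_mono Ioo_subset_Icc_self) (isClosed_Icc.preimage hδcont) hx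
        have h2 : τ' ≤ bdist Ω x ∧ bdist Ω x ≤ ρ' := h1
        exact ⟨by linarith, by linarith⟩
      have hGb : Bornology.IsBounded G :=
        hΩb.subset (fun x hx => (hGρ hx).1)
      -- the comparison function w and the potential
      set w : EuclideanSpace ℝ (Fin N) → ℝ := fun y => c₀ * h y + ε * hs y - u y with hwdef
      set cf : EuclideanSpace ℝ (Fin N) → ℝ := fun y => μ / (bdist Ω y) ^ 2 with hcfdef
      have hδG : ∀ x ∈ G, (0:ℝ) < bdist Ω x := by
        intro x hx
        have hx' : τ' / 2 < bdist Ω x ∧ bdist Ω x < ρ'' := hx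
        linarith [hx'.1, hτ'pos]
      have hccont : ContinuousOn cf G := by
        apply continuousOn_const.div ((hδcont.continuousOn).pow 2)
        intro x hx
        exact pow_ne_zero 2 (hδG x hx).ne'
      have hhC2G : ContDiffOn ℝ 2 h G := hposh.1.1.mono hGσ
      have hhsC2G : ContDiffOn ℝ 2 hs G := hhs.1.1.mono hGσ₀
      have huC2G : ContDiffOn ℝ 2 u G := hu.1.mono hGρ
      have hwC2 : ContDiffOn ℝ 2 w G :=
        ((contDiffOn_const.mul hhC2G).add (contDiffOn_const.mul hhsC2G)).sub huC2G
      have hhposG : ∀ x ∈ G, 0 < h x := fun x hx => hposh.2 x (hGσ hx)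
      have hLh : ∀ x ∈ G, 0 ≤ -(lap h x) - cf x * h x := fun x hx => hposh.1.2 x (hGσ hx)
      have hLw : ∀ x ∈ G, 0 ≤ -(lap w x) - cf x * w x := by
        intro x hx
        have hnx : G ∈ nhds x := hGopen.mem_nhds hx
        have hlapw : lap w x = c₀ * lap h x + ε * lap hs x - lap u x :=
          lap_comb (hhC2G.contDiffAt hnx) (hhsC2G.contDiffAt hnx) (huC2G.contDiffAt hnx)
        have h1 := hposh.1.2 x (hGσ hx)
        have h2 := hhs.1.2 x (hGσ₀ hx)
        have h3 := hu.2 x (hGρ hx)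
        have e1 : 0 ≤ c₀ * (-(lap h x) - μ / (bdist Ω x) ^ 2 * h x) := mul_nonneg hc₀0 h1
        have e2 : 0 ≤ ε * (-(lap hs x) - μ / (bdist Ω x) ^ 2 * hs x) := mul_nonneg hε.le h2
        have hwx : w x = c₀ * h x + ε * hs x - u x := rfl
        have hcfx : cf x = μ / (bdist Ω x) ^ 2 := rfl
        rw [hlapw, hwx, hcfx]
        nlinarith [e1, e2, h3]
      have hfr : ∀ x ∈ closure S \ S, 0 ≤ w x := by
        rintro x ⟨hxc, hxn⟩
        have h1 : τ' ≤ bdist Ω x ∧ bdist Ω x ≤ ρ' :=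
          closure_minimal (preimage_mono Ioo_subset_Icc_self) (isClosed_Icc.preimage hδcont) hxc
        have hxΩ : x ∈ Ω := hmemΩ x (lt_of_lt_of_le hτ'pos h1.1)
        have hcases : bdist Ω x = τ' ∨ bdist Ω x = ρ' := by
          by_contra hcon
          push_neg at hcon
          exact hxn ⟨lt_of_le_of_ne h1.1 (Ne.symm hcon.1), lt_of_le_of_ne h1.2 hcon.2⟩
        have hwx : w x = c₀ * h x + ε * hs x - u x := rfl
        rcases hcases with hδx | hδx
        · -- inner boundary : u ≤ ε hs there
          have hxτ : x ∈ collar Ω τ := ⟨hxΩ, by rw [hδx]; exact hτ'τ⟩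
          have hxσ : x ∈ collar Ω σ :=
            ⟨hxΩ, by rw [hδx]; exact lt_of_lt_of_le (lt_trans hτ'ρ' hρ'ρS) hρSσ⟩
          have := huhs x hxτ
          have hhx : 0 < h x := hposh.2 x hxσ
          rw [hwx]
          nlinarith [mul_nonneg hc₀0 hhx.le]
        · -- outer boundary : x ∈ Γ
          have hxΓ : x ∈ Γ := hδx
          have hxσ₀ : x ∈ collar Ω σ₀ := hΓσ₀ hxΓ
          have h2 := hc₀Γ x hxΓ
          have hhsx : 0 < hs x := hhs.2 x hxσ₀
          rw [hwx]
          nlinarith [mul_pos hε hhsx]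
      have hMP := max_principle i₀ hGopen hSopen hKG hGb hwC2 hhC2G hhposG hccont hLh hLw hfr
      -- conclude the claim
      intro x hx
      by_cases hxτ : bdist Ω x < τ
      · have hxcolτ : x ∈ collar Ω τ := ⟨hx.1, hxτ⟩
        have h1 := huhs x hxcolτ
        have hxσ : x ∈ collar Ω σ := ⟨hx.1, lt_of_lt_of_le hx.2 (le_trans hρ'ρS.le hρSσ)⟩
        have hhx : 0 < h x := hposh.2 x hxσ
        nlinarith [mul_nonneg hc₀0 hhx.le]
      · push_neg at hxτ
        have hxS : x ∈ S := ⟨lt_of_lt_of_le hτ'τ hxτ, hx.2⟩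
        have h1 := hMP x hxS
        have hwx : w x = c₀ * h x + ε * hs x - u x := rfl
        rw [hwx] at h1
        linarith
    -- pass to the limit ε → 0
    have hfinal : ∀ x ∈ collar Ω ρ', u x ≤ c₀ * h x := by
      intro x hx
      by_contra hcon
      push_neg at hcon
      have hxσ₀ : x ∈ collar Ω σ₀ := ⟨hx.1, lt_of_lt_of_le hx.2 (le_trans hρ'ρS.le hρSσ₀)⟩
      have hhsx : 0 < hs x := hhs.2 x hxσ₀
      have hεpos : 0 < (u x - c₀ * h x) / (2 * hs x) := div_pos (by linarith) (by linarith)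
      have h1 := hclaim _ hεpos x hx
      have h2 : (u x - c₀ * h x) / (2 * hs x) * hs x = (u x - c₀ * h x) / 2 := by
        field_simp
      rw [h2] at h1
      linarith
    refine ⟨c₀ + 1, by linarith, ρ', hρ'pos, le_trans hρ'ρS.le (min_le_left _ _), ?_⟩
    intro x hx
    have hxσ : x ∈ collar Ω σ := ⟨hx.1, lt_of_lt_of_le hx.2 (le_trans hρ'ρS.le hρSσ)⟩
    have hhx : 0 < h x := hposh.2 x hxσ
    have := hfinal x hx
    nlinarith
  refine ⟨main, ?_⟩
  intro σ hσ h hposh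
  obtain ⟨c, hc, ρ', hρ'pos, hρ'le, hbd⟩ := main σ hσ h hposh
  refine ⟨c, ρ', hρ'pos, hρ'le, ?_⟩
  intro x hx
  have hxσ : x ∈ collar Ω σ := ⟨hx.1, lt_of_lt_of_le hx.2 (le_trans hρ'le (min_le_right _ _))⟩
  have hhx : 0 < h x := hposh.2 x hxσ
  rw [div_le_iff₀ hhx]
  have := hbd x hx
  linarith
end
end

section
/- Let μ < 1/4. (a) If β ∈ (β₋, β₊) then there exists ρ ∈ (0, ρ₀) such that x ↦ δ(x)^β is a super-harmonic of L_μ on Ω_ρ. (b) If β < β₋ or β > β₊ then there exists ρ ∈ (0, ρ₀) such that x ↦ δ(x)^β is a sub-harmonic of L_μ on Ω_ρ. -/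
open Set Metric MeasureTheory Real

noncomputable section

lemma collar_open {N : ℕ} (Ω : Set (EuclideanSpace ℝ (Fin N))) (hΩo : IsOpen Ω) (ρ : ℝ) :
    IsOpen (collar Ω ρ) := by
  have : collar Ω ρ = Ω ∩ (bdist Ω) ⁻¹' (Set.Iio ρ) := rfl
  rw [this]
  exact hΩo.inter (IsOpen.preimage (by exact continuous_infDist_pt _) isOpen_Iio)

lemma bdist_pos {N : ℕ} (hN : 2 ≤ N) (Ω : Set (EuclideanSpace ℝ (Fin N))) (hΩo : IsOpen Ω)
    (hΩb : Bornology.IsBounded Ω) (x : EuclideanSpace ℝ (Fin N)) (hx : x ∈ Ω) :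
    0 < bdist Ω x := by
  haveI : Nontrivial (EuclideanSpace ℝ (Fin N)) := by
    refine ⟨0, EuclideanSpace.single ⟨0, by omega⟩ 1, ?_⟩
    intro h
    have := congrArg (fun v : EuclideanSpace ℝ (Fin N) => v ⟨0, by omega⟩) h.symm
    simp [EuclideanSpace.single_apply] at this
  have hne : Ωᶜ.Nonempty := by
    by_contra h
    rw [Set.not_nonempty_iff_eq_empty, Set.compl_empty_iff] at h
    exact NormedSpace.unbounded_univ ℝ (EuclideanSpace ℝ (Fin N)) (h ▸ hΩb)
  exact (hΩo.isClosed_compl.notMem_iff_infDist_pos hne).mp (by simpa using hx)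

lemma grad_sum_one {N : ℕ} (f : EuclideanSpace ℝ (Fin N) → ℝ) (x : EuclideanSpace ℝ (Fin N))
    (hg : ‖gradient f x‖ = 1) :
    ∑ i : Fin N, (fderiv ℝ f x (EuclideanSpace.single i 1)) ^ 2 = 1 := by
  have key : ∀ i : Fin N, fderiv ℝ f x (EuclideanSpace.single i 1) = gradient f x i := by
    intro i
    have : inner ℝ (gradient f x) (EuclideanSpace.single i (1:ℝ))
        = fderiv ℝ f x (EuclideanSpace.single i 1) := by
      rw [gradient, InnerProductSpace.toDual_symm_apply]
    rw [← this, real_inner_comm, EuclideanSpace.inner_single_left]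
    simp
  simp_rw [key]
  have := EuclideanSpace.norm_eq (gradient f x)
  rw [hg] at this
  have h2 : Real.sqrt (∑ i : Fin N, ‖gradient f x i‖ ^ 2) = 1 := this.symm
  have h3 : (∑ i : Fin N, ‖gradient f x i‖ ^ 2) = 1 := by
    have := congrArg (· ^ 2) h2
    simpa [Real.sq_sqrt (Finset.sum_nonneg fun i _ => sq_nonneg _)] using this
  simpa [Real.norm_eq_abs, sq_abs] using h3

lemma second_deriv_rpow {N : ℕ} (f : EuclideanSpace ℝ (Fin N) → ℝ)
    (U : Set (EuclideanSpace ℝ (Fin N)))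
    (hU : IsOpen U) (hf : ContDiffOn ℝ 2 f U) (hpos : ∀ y ∈ U, 0 < f y)
    (x : EuclideanSpace ℝ (Fin N)) (hx : x ∈ U) (β : ℝ) (v : EuclideanSpace ℝ (Fin N)) :
    fderiv ℝ (fun y => fderiv ℝ (fun z => f z ^ β) y v) x v
      = β * (β - 1) * (f x) ^ (β - 2) * (fderiv ℝ f x v) ^ 2
        + β * (f x) ^ (β - 1) * fderiv ℝ (fun y => fderiv ℝ f y v) x v := by
  have hfa : ∀ y ∈ U, ContDiffAt ℝ 2 f y := fun y hy => hf.contDiffAt (hU.mem_nhds hy)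
  have hdf : ∀ y ∈ U, DifferentiableAt ℝ f y := fun y hy =>
    ((hfa y hy).differentiableAt (by norm_num))
  have step1 : ∀ y ∈ U, fderiv ℝ (fun z => f z ^ β) y v
      = β * (f y) ^ (β - 1) * fderiv ℝ f y v := by
    intro y hy
    have h1 : HasFDerivAt (fun z => f z ^ β) ((β * f y ^ (β - 1)) • fderiv ℝ f y) y :=
      (hdf y hy).hasFDerivAt.rpow_const (Or.inl (hpos y hy).ne')
    rw [h1.fderiv]; simp [mul_comm]
  have heq : (fun y => fderiv ℝ (fun z => f z ^ β) y v)
      =ᶠ[nhds x] (fun y => β * (f y) ^ (β - 1) * fderiv ℝ f y v) := by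
    filter_upwards [hU.mem_nhds hx] with y hy using step1 y hy
  rw [heq.fderiv_eq]
  have hd1 : DifferentiableAt ℝ (fun y => β * (f y) ^ (β - 1)) x :=
    ((hdf x hx).rpow_const (Or.inl (hpos x hx).ne')).const_mul β
  have hfd : ContDiffOn ℝ 1 (fderiv ℝ f) U := hf.fderiv_of_isOpen hU (by norm_num)
  have hd2 : DifferentiableAt ℝ (fun y => fderiv ℝ f y v) x := by
    have := ((hfd.contDiffAt (hU.mem_nhds hx)).differentiableAt one_ne_zero)
    exact this.clm_apply (differentiableAt_const v)
  rw [fderiv_fun_mul hd1 hd2]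
  have h3 : fderiv ℝ (fun y => β * (f y) ^ (β - 1)) x
      = (β * ((β - 1) * f x ^ (β - 2))) • fderiv ℝ f x := by
    have h1 : HasFDerivAt (fun z => f z ^ (β - 1))
        (((β - 1) * f x ^ (β - 1 - 1)) • fderiv ℝ f x) x :=
      (hdf x hx).hasFDerivAt.rpow_const (Or.inl (hpos x hx).ne')
    have := (h1.const_mul β).fderiv
    rw [this, smul_smul]
    ring_nf
  rw [h3]
  simp only [ContinuousLinearMap.add_apply, ContinuousLinearMap.smul_apply, smul_eq_mul]
  ring

lemma lap_rpow {N : ℕ} (f : EuclideanSpace ℝ (Fin N) → ℝ)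
    (U : Set (EuclideanSpace ℝ (Fin N)))
    (hU : IsOpen U) (hf : ContDiffOn ℝ 2 f U) (hpos : ∀ y ∈ U, 0 < f y)
    (x : EuclideanSpace ℝ (Fin N)) (hx : x ∈ U) (hg : ‖gradient f x‖ = 1) (β : ℝ) :
    lap (fun y => f y ^ β) x
      = β * (β - 1) * (f x) ^ (β - 2) + β * (f x) ^ (β - 1) * lap f x := by
  unfold lap
  have hdf : DifferentiableAt ℝ f x :=
    (hf.contDiffAt (hU.mem_nhds hx)).differentiableAt (by norm_num)
  calc ∑ i : Fin N, fderiv ℝ (fun y => fderiv ℝ (fun z => f z ^ β) y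
          (EuclideanSpace.single i 1)) x (EuclideanSpace.single i 1)
      = ∑ i : Fin N, (β * (β - 1) * (f x) ^ (β - 2) *
          (fderiv ℝ f x (EuclideanSpace.single i 1)) ^ 2
          + β * (f x) ^ (β - 1) * fderiv ℝ (fun y => fderiv ℝ f y
            (EuclideanSpace.single i 1)) x (EuclideanSpace.single i 1)) := by
        refine Finset.sum_congr rfl fun i _ => ?_
        exact second_deriv_rpow f U hU hf hpos x hx β (EuclideanSpace.single i 1)
    _ = β * (β - 1) * (f x) ^ (β - 2) *
          (∑ i : Fin N, (fderiv ℝ f x (EuclideanSpace.single i 1)) ^ 2)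
          + β * (f x) ^ (β - 1) * ∑ i : Fin N, fderiv ℝ (fun y => fderiv ℝ f y
            (EuclideanSpace.single i 1)) x (EuclideanSpace.single i 1) := by
        rw [Finset.sum_add_distrib, Finset.mul_sum, Finset.mul_sum]
    _ = _ := by rw [grad_sum_one f x hg, mul_one]

lemma main_key {N : ℕ} (hN : 2 ≤ N) (Ω : Set (EuclideanSpace ℝ (Fin N)))
    (hΩo : IsOpen Ω) (hΩb : Bornology.IsBounded Ω)
    (ρ₀ : ℝ) (hρ₀ : GoodCollar Ω ρ₀) (μ β : ℝ) (hc : β * (1 - β) - μ ≠ 0) :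
    ∃ ρ, 0 < ρ ∧ ρ < ρ₀ ∧ ContDiffOn ℝ 2 (fun x => bdist Ω x ^ β) (collar Ω ρ) ∧
      ∀ x ∈ collar Ω ρ,
        -(lap (fun x => bdist Ω x ^ β) x) - μ / (bdist Ω x) ^ 2 * (bdist Ω x ^ β)
          = (bdist Ω x) ^ (β - 2) * ((β * (1 - β) - μ) - β * bdist Ω x * lap (bdist Ω) x)
        ∧ |β * bdist Ω x * lap (bdist Ω) x| < |β * (1 - β) - μ| := by
  obtain ⟨hρ₀pos, hC2, hgrad, M, hM⟩ := hρ₀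
  set f := bdist Ω
  have hUo : IsOpen (collar Ω ρ₀) := collar_open Ω hΩo ρ₀
  have hpos : ∀ y ∈ collar Ω ρ₀, 0 < f y := fun y hy => bdist_pos hN Ω hΩo hΩb y hy.1
  set c := β * (1 - β) - μ with hcdef
  have habs : 0 < |c| := abs_pos.mpr hc
  set M' := max M 0 with hM'def
  have hM'0 : 0 ≤ M' := le_max_right _ _
  set K := |β| * M' + 1 with hKdef
  have hK : 0 < K := by positivity
  refine ⟨min (ρ₀ / 2) (|c| / K), by positivity, ?_, ?_, ?_⟩
  · exact lt_of_le_of_lt (min_le_left _ _) (by linarith)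
  · -- smoothness
    intro x hx
    have hx0 : x ∈ collar Ω ρ₀ := ⟨hx.1, lt_of_lt_of_le hx.2
      (le_trans (min_le_left _ _) (by linarith))⟩
    exact (((hC2.contDiffAt (hUo.mem_nhds hx0)).rpow_const_of_ne
      (hpos x hx0).ne')).contDiffWithinAt
  · intro x hx
    have hx0 : x ∈ collar Ω ρ₀ := ⟨hx.1, lt_of_lt_of_le hx.2
      (le_trans (min_le_left _ _) (by linarith))⟩
    have hδ : 0 < f x := hpos x hx0
    have hlap := lap_rpow f (collar Ω ρ₀) hUo hC2 hpos x hx0 (hgrad x hx0) β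
    constructor
    · rw [hlap]
      set δ := f x
      set L := lap f x
      have e1 : δ ^ (β - 1) = δ ^ (β - 2) * δ := by
        rw [← Real.rpow_add_one hδ.ne' (β - 2)]; ring_nf
      have e2 : δ ^ β = δ ^ (β - 2) * δ ^ (2:ℕ) := by
        rw [← Real.rpow_natCast δ 2, ← Real.rpow_add hδ]; norm_num
      rw [e1, e2]
      have h2 : (δ:ℝ) ^ (2:ℕ) ≠ 0 := by positivity
      field_simp
      ring
    · -- estimate
      have hL : |lap f x| ≤ M' := le_trans (hM x hx0) (le_max_left _ _)
      have hδ2 : f x < |c| / K := lt_of_lt_of_le hx.2 (min_le_right _ _)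
      have h1 : |β * f x * lap f x| ≤ |β| * M' * f x := by
        rw [abs_mul, abs_mul, abs_of_pos hδ]
        calc |β| * f x * |lap f x| ≤ |β| * f x * M' :=
              mul_le_mul_of_nonneg_left hL (by positivity)
          _ = |β| * M' * f x := by ring
      have h2 : |β| * M' * f x < K * f x := by nlinarith
      have h3 : K * f x < |c| := by
        rw [lt_div_iff₀ hK] at hδ2; nlinarith
      linarith

/-- Let `μ < 1/4` and `β₋ = 1/2 - √(1/4-μ)`, `β₊ = 1/2 + √(1/4-μ)`.
(a) If `β₋ < β < β₊` then `δ^β` is a super-harmonic of `L_μ` on some `Ω_ρ`, `ρ ∈ (0,ρ₀)`.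
(b) If `β < β₋` or `β > β₊` then `δ^β` is a sub-harmonic of `L_μ` on some such `Ω_ρ`. -/
theorem stmt4 {N : ℕ} (hN : 2 ≤ N) (Ω : Set (EuclideanSpace ℝ (Fin N)))
    (hΩo : IsOpen Ω) (hΩne : Ω.Nonempty) (hΩb : Bornology.IsBounded Ω)
    (ρ₀ : ℝ) (hρ₀ : GoodCollar Ω ρ₀) (μ : ℝ) (hμ : μ < 1 / 4) :
    (∀ β : ℝ, 1 / 2 - Real.sqrt (1 / 4 - μ) < β → β < 1 / 2 + Real.sqrt (1 / 4 - μ) →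
      ∃ ρ, 0 < ρ ∧ ρ < ρ₀ ∧
        SuperHarm Ω μ (collar Ω ρ) (fun x => bdist Ω x ^ β)) ∧
    (∀ β : ℝ, (β < 1 / 2 - Real.sqrt (1 / 4 - μ) ∨ 1 / 2 + Real.sqrt (1 / 4 - μ) < β) →
      ∃ ρ, 0 < ρ ∧ ρ < ρ₀ ∧
        SubHarm Ω μ (collar Ω ρ) (fun x => bdist Ω x ^ β)) := by
  have hs : Real.sqrt (1/4 - μ) ^ 2 = 1/4 - μ := Real.sq_sqrt (by linarith)
  have hsp : 0 ≤ Real.sqrt (1/4 - μ) := Real.sqrt_nonneg _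
  constructor
  · intro β h1 h2
    have hc : 0 < β * (1 - β) - μ := by nlinarith [hs]
    obtain ⟨ρ, hρpos, hρlt, hsmooth, hkey⟩ :=
      main_key hN Ω hΩo hΩb ρ₀ hρ₀ μ β hc.ne'
    refine ⟨ρ, hρpos, hρlt, hsmooth, fun x hx => ?_⟩
    obtain ⟨heq, hest⟩ := hkey x hx
    rw [heq]
    have hδ : 0 < bdist Ω x := bdist_pos hN Ω hΩo hΩb x hx.1
    have hA : 0 < (bdist Ω x) ^ (β - 2) := Real.rpow_pos_of_pos hδ _
    rw [abs_of_pos hc] at hest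
    have : 0 < (β * (1 - β) - μ) - β * bdist Ω x * lap (bdist Ω) x := by
      have := le_abs_self (β * bdist Ω x * lap (bdist Ω) x)
      linarith
    positivity
  · intro β h
    have hc : β * (1 - β) - μ < 0 := by rcases h with h | h <;> nlinarith [hs]
    obtain ⟨ρ, hρpos, hρlt, hsmooth, hkey⟩ :=
      main_key hN Ω hΩo hΩb ρ₀ hρ₀ μ β hc.ne
    refine ⟨ρ, hρpos, hρlt, hsmooth, fun x hx => ?_⟩
    obtain ⟨heq, hest⟩ := hkey x hx
    rw [heq]
    have hδ : 0 < bdist Ω x := bdist_pos hN Ω hΩo hΩb x hx.1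
    have hA : 0 < (bdist Ω x) ^ (β - 2) := Real.rpow_pos_of_pos hδ _
    rw [abs_of_neg hc] at hest
    have hneg : (β * (1 - β) - μ) - β * bdist Ω x * lap (bdist Ω) x < 0 := by
      have := neg_abs_le (β * bdist Ω x * lap (bdist Ω) x)
      linarith
    nlinarith
end
end
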